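/- arXiv:1912.04626 — 4 statements merged into one kernel-verified Lean document; each statement's English description precedes it below -/
import Mathlib

section
/- Let v, w : ℝ² → ℝ be C¹ vector field components such that all solutions of the planar system ẋ = v(x,y), ẏ = w(x,y) exist for all t ∈ ℝ. Suppose w(x,1) > 0 for all x and w(x,-1) < 0 for all x. Then there exists an initial condition (0, y₀) with y₀ ∈ (-1,1) whose solution (x(t), y(t)) satisfies y(t) ∈ (-1,1) for all t ≥ 0. -/
open Set Filter Topology

private lemma aux_exists_gt {f : ℝ → ℝ} {d a η : ℝ} (hf : HasDerivAt f d a) (hd : 0 < d)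
    (hη : 0 < η) : ∃ t1, a < t1 ∧ t1 < a + η ∧ f a < f t1 := by
  have hs : Tendsto (slope f a) (𝓝[≠] a) (𝓝 d) := hasDerivAt_iff_tendsto_slope.mp hf
  have h1 : ∀ᶠ z in 𝓝[≠] a, 0 < slope f a z := hs.eventually (eventually_gt_nhds hd)
  have h2 : ∀ᶠ z in 𝓝[>] a, 0 < slope f a z :=
    h1.filter_mono (nhdsWithin_mono a (show Ioi a ⊆ {a}ᶜ from
      fun z hz => Set.mem_compl_singleton_iff.mpr (LT.lt.ne' hz)))
  have h3 : ∀ᶠ z in 𝓝[>] a, z ∈ Ioo a (a + η) :=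
    eventually_of_mem (Ioo_mem_nhdsGT_of_mem ⟨le_refl a, by linarith⟩) (fun z hz => hz)
  obtain ⟨z, hz1, hz2⟩ := (h2.and h3).exists
  rw [slope_def_field] at hz1
  have hza : 0 < z - a := by linarith [hz2.1]
  have : 0 < f z - f a := by
    rcases div_pos_iff.mp hz1 with ⟨h, _⟩ | ⟨_, h⟩
    · exact h
    · linarith
  exact ⟨z, hz2.1, hz2.2, by linarith⟩

private lemma aux_exists_lt {f : ℝ → ℝ} {d a η : ℝ} (hf : HasDerivAt f d a) (hd : d < 0)
    (hη : 0 < η) : ∃ t1, a < t1 ∧ t1 < a + η ∧ f t1 < f a := by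
  obtain ⟨t1, h1, h2, h3⟩ := aux_exists_gt hf.neg (by linarith) hη
  exact ⟨t1, h1, h2, by simpa using h3⟩

/-- Continuous dependence on initial conditions, on a compact time interval. -/
private lemma aux_contDep (F : ℝ × ℝ → ℝ × ℝ) (hF : ContDiff ℝ 1 F) (γ : ℝ → ℝ × ℝ)
    (hγ : ∀ u, HasDerivAt γ (F (γ u)) u) (t ε : ℝ) (ht : 0 ≤ t) (hε0 : 0 < ε) (hε1 : ε ≤ 1) :
    ∃ δ > 0, ∀ γ' : ℝ → ℝ × ℝ, (∀ u, HasDerivAt γ' (F (γ' u)) u) →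
      dist (γ' 0) (γ 0) < δ → ∀ τ ∈ Icc 0 t, dist (γ' τ) (γ τ) < ε := by
  have hγc : Continuous γ := continuous_iff_continuousAt.mpr fun u => (hγ u).continuousAt
  have hKcpt : IsCompact (γ '' Icc 0 t) := isCompact_Icc.image hγc
  obtain ⟨R, hR⟩ := hKcpt.isBounded.subset_closedBall 0
  have hfd : Continuous (fderiv ℝ F) := hF.continuous_fderiv one_ne_zero
  obtain ⟨M, hM⟩ := (isCompact_closedBall (0 : ℝ × ℝ) (R + 1)).exists_bound_of_continuousOn
    hfd.continuousOn
  set L : NNReal := ⟨max M 0, le_max_right _ _⟩ with hLdef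
  have hLip : LipschitzOnWith L F (Metric.closedBall (0 : ℝ × ℝ) (R + 1)) := by
    apply (convex_closedBall _ _).lipschitzOnWith_of_nnnorm_fderiv_le
      (fun x _ => (hF.differentiable one_ne_zero).differentiableAt)
    intro x hx
    have h1 : ‖fderiv ℝ F x‖ ≤ max M 0 := le_trans (hM x hx) (le_max_left _ _)
    exact_mod_cast h1
  have hLt : 0 ≤ (L : ℝ) * t := mul_nonneg L.2 ht
  have hexp : (1 : ℝ) ≤ Real.exp ((L : ℝ) * t) := Real.one_le_exp hLt
  have hexppos : 0 < Real.exp ((L : ℝ) * t) := Real.exp_pos _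
  set δ := ε / (2 * Real.exp ((L : ℝ) * t)) with hδdef
  have hδ : 0 < δ := by positivity
  have hδe : δ * Real.exp ((L : ℝ) * t) = ε / 2 := by
    rw [hδdef]; field_simp
  have hδε : δ < ε := by nlinarith
  refine ⟨δ, hδ, ?_⟩
  intro γ' hγ' h0 τ hτ
  by_contra hcon
  push_neg at hcon
  have hγ'c : Continuous γ' := continuous_iff_continuousAt.mpr fun u => (hγ' u).continuousAt
  set g : ℝ → ℝ := fun u => dist (γ' u) (γ u) with hgdef
  have hgc : Continuous g := hγ'c.dist hγc
  set E : Set ℝ := {u | u ∈ Icc 0 t ∧ ε ≤ g u} with hEdef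
  have hEne : E.Nonempty := ⟨τ, hτ, hcon⟩
  have hEc : IsClosed E := isClosed_Icc.inter (isClosed_le continuous_const hgc)
  have hEb : BddBelow E := ⟨0, fun u hu => hu.1.1⟩
  set u0 := sInf E with hu0def
  have hu0E : u0 ∈ E := hEc.csInf_mem hEne hEb
  have hg0 : g 0 < ε := lt_of_lt_of_le h0 hδε.le
  have hu0pos : 0 < u0 := by
    rcases eq_or_lt_of_le hu0E.1.1 with h | h
    · exfalso; have := hu0E.2; rw [← h] at this; linarith
    · exact h
  have hbef : ∀ u ∈ Ico 0 u0, g u < ε := by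
    intro u hu
    by_contra hge
    push_neg at hge
    have : u ∈ E := ⟨⟨hu.1, hu.2.le.trans hu0E.1.2⟩, hge⟩
    exact absurd (csInf_le hEb this) (not_le.mpr hu.2)
  have hmemγ : ∀ u ∈ Ico 0 u0, γ u ∈ Metric.closedBall (0 : ℝ × ℝ) (R + 1) := by
    intro u hu
    have h1 : γ u ∈ Metric.closedBall 0 R :=
      hR (mem_image_of_mem _ ⟨hu.1, hu.2.le.trans hu0E.1.2⟩)
    exact Metric.closedBall_subset_closedBall (by linarith) h1
  have hmemγ' : ∀ u ∈ Ico 0 u0, γ' u ∈ Metric.closedBall (0 : ℝ × ℝ) (R + 1) := by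
    intro u hu
    have h1 : dist (γ' u) (γ u) < ε := hbef u hu
    have h2 : dist (γ u) 0 ≤ R :=
      hR (mem_image_of_mem _ ⟨hu.1, hu.2.le.trans hu0E.1.2⟩)
    have h3 := dist_triangle (γ' u) (γ u) 0
    rw [Metric.mem_closedBall]
    linarith
  have key := dist_le_of_trajectories_ODE_of_mem (v := fun _ p => F p)
    (s := fun _ => Metric.closedBall (0 : ℝ × ℝ) (R + 1)) (a := 0) (b := u0)
    (fun _ _ => hLip) hγ'c.continuousOn (fun u _ => (hγ' u).hasDerivWithinAt) hmemγ'
    hγc.continuousOn (fun u _ => (hγ u).hasDerivWithinAt) hmemγ h0.le u0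
    (right_mem_Icc.mpr hu0pos.le)
  have hmono : Real.exp ((L : ℝ) * (u0 - 0)) ≤ Real.exp ((L : ℝ) * t) := by
    apply Real.exp_le_exp.mpr
    have h1 : u0 ≤ t := hu0E.1.2
    nlinarith [L.2]
  have h4 : δ * Real.exp ((L : ℝ) * (u0 - 0)) ≤ ε / 2 := by
    calc δ * Real.exp ((L : ℝ) * (u0 - 0)) ≤ δ * Real.exp ((L : ℝ) * t) :=
          mul_le_mul_of_nonneg_left hmono hδ.le
      _ = ε / 2 := hδe
  have h5 : ε ≤ g u0 := hu0E.2
  have h6 : g u0 = dist (γ' u0) (γ u0) := rfl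
  linarith [key, h6 ▸ h5]

private lemma aux_open (S I : Set ℝ)
    (h : ∀ s ∈ S, ∃ δ > 0, ∀ s' ∈ I, |s' - s| < δ → s' ∈ S) :
    ∃ U : Set ℝ, IsOpen U ∧ S ⊆ U ∧ U ∩ I ⊆ S := by
  refine ⟨{x | ∃ δ > 0, ∀ s' ∈ I, |s' - x| < δ → s' ∈ S}, ?_, ?_, ?_⟩
  · rw [Metric.isOpen_iff]
    rintro x ⟨δ, hδ, hx⟩
    refine ⟨δ / 2, by linarith, ?_⟩
    intro z hz
    rw [Metric.mem_ball, Real.dist_eq] at hz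
    refine ⟨δ / 2, by linarith, fun s' hs' hd => hx s' hs' ?_⟩
    have h1 : |s' - x| ≤ |s' - z| + |z - x| := abs_sub_le _ _ _
    linarith
  · intro s hs; exact h s hs
  · rintro x ⟨⟨δ, hδ, hx⟩, hxI⟩
    exact hx x hxI (by simpa using hδ)

/-- Ważewski trapping in a strip for an autonomous planar system. -/
theorem stmt_0
    (v w : ℝ → ℝ → ℝ)
    (hv : ContDiff ℝ 1 (fun p : ℝ × ℝ => v p.1 p.2))
    (hw : ContDiff ℝ 1 (fun p : ℝ × ℝ => w p.1 p.2))
    -- all solutions exist globally: through every point there is a global solution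
    (hglobal : ∀ p : ℝ × ℝ, ∃ x y : ℝ → ℝ,
      x 0 = p.1 ∧ y 0 = p.2 ∧
      (∀ t : ℝ, HasDerivAt x (v (x t) (y t)) t) ∧
      (∀ t : ℝ, HasDerivAt y (w (x t) (y t)) t))
    (htop : ∀ x : ℝ, 0 < w x 1)
    (hbot : ∀ x : ℝ, w x (-1) < 0) :
    ∃ y₀ ∈ Ioo (-1 : ℝ) 1, ∃ x y : ℝ → ℝ,
      x 0 = 0 ∧ y 0 = y₀ ∧
      (∀ t : ℝ, HasDerivAt x (v (x t) (y t)) t) ∧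
      (∀ t : ℝ, HasDerivAt y (w (x t) (y t)) t) ∧
      ∀ t : ℝ, 0 ≤ t → y t ∈ Ioo (-1 : ℝ) 1 := by
  classical
  choose X Y hX0 hY0 hX' hY' using fun s : ℝ => hglobal (0, s)
  have hF : ContDiff ℝ 1 (fun p : ℝ × ℝ => (v p.1 p.2, w p.1 p.2)) := hv.prodMk hw
  have hγ : ∀ s u, HasDerivAt (fun u => ((X s u, Y s u) : ℝ × ℝ))
      ((fun p : ℝ × ℝ => (v p.1 p.2, w p.1 p.2)) (X s u, Y s u)) u :=
    fun s u => (hX' s u).prodMk (hY' s u)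
  have hYc : ∀ s, Continuous (Y s) :=
    fun s => continuous_iff_continuousAt.mpr fun u => (hY' s u).continuousAt
  set A : Set ℝ := {s | s ∈ Icc (-1 : ℝ) 1 ∧
    ∃ t, 0 ≤ t ∧ 1 < Y s t ∧ ∀ τ ∈ Icc 0 t, -1 < Y s τ} with hAdef
  set B : Set ℝ := {s | s ∈ Icc (-1 : ℝ) 1 ∧
    ∃ t, 0 ≤ t ∧ Y s t < -1 ∧ ∀ τ ∈ Icc 0 t, Y s τ < 1} with hBdef
  -- snd-coordinate distance bound
  have hsnd : ∀ s s' τ, |Y s' τ - Y s τ| ≤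
      dist ((X s' τ, Y s' τ) : ℝ × ℝ) ((X s τ, Y s τ) : ℝ × ℝ) := by
    intro s s' τ
    rw [Prod.dist_eq]
    exact le_trans (le_of_eq (Real.dist_eq _ _).symm) (le_max_right _ _)
  have hdist0 : ∀ s s' (δ : ℝ), |s' - s| < δ →
      dist ((X s' 0, Y s' 0) : ℝ × ℝ) ((X s 0, Y s 0) : ℝ × ℝ) < δ := by
    intro s s' δ h
    rw [Prod.dist_eq, hX0, hX0, hY0, hY0, dist_self, Real.dist_eq,
      max_eq_right (abs_nonneg _)]
    exact h
  -- A is relatively open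
  have hAopen : ∀ s ∈ A, ∃ δ > 0, ∀ s' ∈ Icc (-1 : ℝ) 1, |s' - s| < δ → s' ∈ A := by
    rintro s ⟨hsI, t, ht0, hYt, hYlo⟩
    obtain ⟨τm, hτmI, hτmin⟩ := isCompact_Icc.exists_isMinOn (nonempty_Icc.mpr ht0)
      (hYc s).continuousOn
    have hm1 : 0 < Y s t - 1 := by linarith
    have hm2 : 0 < Y s τm + 1 := by linarith [hYlo τm hτmI]
    set ε := min 1 (min (Y s t - 1) (Y s τm + 1)) with hεdef
    have hε0 : 0 < ε := lt_min one_pos (lt_min hm1 hm2)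
    obtain ⟨δ, hδ, hcd⟩ := aux_contDep _ hF (fun u => ((X s u, Y s u) : ℝ × ℝ)) (hγ s) t ε
      ht0 hε0 (min_le_left _ _)
    refine ⟨δ, hδ, ?_⟩
    intro s' hs'I hss'
    have hclose := hcd (fun u => ((X s' u, Y s' u) : ℝ × ℝ)) (hγ s') (hdist0 s s' δ hss')
    have hεm1 : ε ≤ Y s t - 1 := (min_le_right _ _).trans (min_le_left _ _)
    have hεm2 : ε ≤ Y s τm + 1 := (min_le_right _ _).trans (min_le_right _ _)
    refine ⟨hs'I, t, ht0, ?_, ?_⟩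
    · have h := hclose t (right_mem_Icc.mpr ht0)
      have habs := abs_lt.mp (lt_of_le_of_lt (hsnd s s' t) h)
      linarith [habs.1]
    · intro τ hτ
      have h := hclose τ hτ
      have habs := abs_lt.mp (lt_of_le_of_lt (hsnd s s' τ) h)
      have hmin : Y s τm ≤ Y s τ := hτmin hτ
      linarith [habs.1]
  -- B is relatively open
  have hBopen : ∀ s ∈ B, ∃ δ > 0, ∀ s' ∈ Icc (-1 : ℝ) 1, |s' - s| < δ → s' ∈ B := by
    rintro s ⟨hsI, t, ht0, hYt, hYhi⟩
    obtain ⟨τm, hτmI, hτmax⟩ := isCompact_Icc.exists_isMaxOn (nonempty_Icc.mpr ht0)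
      (hYc s).continuousOn
    have hm1 : 0 < -1 - Y s t := by linarith
    have hm2 : 0 < 1 - Y s τm := by linarith [hYhi τm hτmI]
    set ε := min 1 (min (-1 - Y s t) (1 - Y s τm)) with hεdef
    have hε0 : 0 < ε := lt_min one_pos (lt_min hm1 hm2)
    obtain ⟨δ, hδ, hcd⟩ := aux_contDep _ hF (fun u => ((X s u, Y s u) : ℝ × ℝ)) (hγ s) t ε
      ht0 hε0 (min_le_left _ _)
    refine ⟨δ, hδ, ?_⟩
    intro s' hs'I hss'
    have hclose := hcd (fun u => ((X s' u, Y s' u) : ℝ × ℝ)) (hγ s') (hdist0 s s' δ hss')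
    have hεm1 : ε ≤ -1 - Y s t := (min_le_right _ _).trans (min_le_left _ _)
    have hεm2 : ε ≤ 1 - Y s τm := (min_le_right _ _).trans (min_le_right _ _)
    refine ⟨hs'I, t, ht0, ?_, ?_⟩
    · have h := hclose t (right_mem_Icc.mpr ht0)
      have habs := abs_lt.mp (lt_of_le_of_lt (hsnd s s' t) h)
      linarith [habs.2]
    · intro τ hτ
      have h := hclose τ hτ
      have habs := abs_lt.mp (lt_of_le_of_lt (hsnd s s' τ) h)
      have hmax : Y s τ ≤ Y s τm := hτmax hτ
      linarith [habs.2]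
  -- 1 ∈ A
  have h1A : (1 : ℝ) ∈ A := by
    have hd : 0 < w (X 1 0) (Y 1 0) := by rw [hY0]; exact htop _
    obtain ⟨η, hη, hball⟩ : ∃ η > 0, ∀ τ : ℝ, |τ| < η → -1 < Y 1 τ := by
      have hop : IsOpen {τ : ℝ | -1 < Y 1 τ} := isOpen_lt continuous_const (hYc 1)
      obtain ⟨η, hη, hsub⟩ := Metric.isOpen_iff.mp hop 0 (by
        simp only [mem_setOf_eq, hY0]; norm_num)
      exact ⟨η, hη, fun τ hτ => hsub (by simpa [Real.dist_eq] using hτ)⟩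
    obtain ⟨t1, ht1a, ht1b, ht1c⟩ := aux_exists_gt (hY' 1 0) hd hη
    rw [hY0] at ht1c
    refine ⟨by norm_num, t1, ht1a.le, ht1c, ?_⟩
    intro τ hτ
    exact hball τ (by rw [abs_of_nonneg hτ.1]; linarith [hτ.2, ht1b])
  -- -1 ∈ B
  have hm1B : (-1 : ℝ) ∈ B := by
    have hd : w (X (-1) 0) (Y (-1) 0) < 0 := by rw [hY0]; exact hbot _
    obtain ⟨η, hη, hball⟩ : ∃ η > 0, ∀ τ : ℝ, |τ| < η → Y (-1) τ < 1 := by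
      have hop : IsOpen {τ : ℝ | Y (-1) τ < 1} := isOpen_lt (hYc (-1)) continuous_const
      obtain ⟨η, hη, hsub⟩ := Metric.isOpen_iff.mp hop 0 (by
        simp only [mem_setOf_eq, hY0]; norm_num)
      exact ⟨η, hη, fun τ hτ => hsub (by simpa [Real.dist_eq] using hτ)⟩
    obtain ⟨t1, ht1a, ht1b, ht1c⟩ := aux_exists_lt (hY' (-1) 0) hd hη
    rw [hY0] at ht1c
    refine ⟨by norm_num, t1, ht1a.le, ht1c, ?_⟩
    intro τ hτ
    exact hball τ (by rw [abs_of_nonneg hτ.1]; linarith [hτ.2, ht1b])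
  -- A and B are disjoint
  have hAB : ∀ s, s ∈ A → s ∈ B → False := by
    rintro s ⟨-, t1, ht1, hgt, hlo⟩ ⟨-, t2, ht2, hlt, hhi⟩
    rcases le_total t1 t2 with h | h
    · linarith [hhi t1 ⟨ht1, h⟩]
    · linarith [hlo t2 ⟨ht2, h⟩]
  -- connectedness gives a trapped initial condition
  obtain ⟨y₀, hy₀I, hyA, hyB⟩ : ∃ y₀ ∈ Icc (-1 : ℝ) 1, y₀ ∉ A ∧ y₀ ∉ B := by
    by_contra hc
    push_neg at hc
    obtain ⟨UA, hUAo, hAU, hUA⟩ := aux_open A (Icc (-1 : ℝ) 1) hAopen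
    obtain ⟨UB, hUBo, hBU, hUB⟩ := aux_open B (Icc (-1 : ℝ) 1) hBopen
    have hcover : Icc (-1 : ℝ) 1 ⊆ UA ∪ UB := by
      intro z hz
      by_cases hzA : z ∈ A
      · exact Or.inl (hAU hzA)
      · exact Or.inr (hBU (hc z hz hzA))
    obtain ⟨z, hzI, hzU⟩ := isPreconnected_Icc UA UB hUAo hUBo hcover
      ⟨1, by norm_num, hAU h1A⟩ ⟨-1, by norm_num, hBU hm1B⟩
    exact hAB z (hUA ⟨hzU.1, hzI⟩) (hUB ⟨hzU.2, hzI⟩)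
  have hyIoo : y₀ ∈ Ioo (-1 : ℝ) 1 := by
    constructor
    · rcases eq_or_lt_of_le hy₀I.1 with h | h
      · exact absurd (h ▸ hm1B) hyB
      · exact h
    · rcases eq_or_lt_of_le hy₀I.2 with h | h
      · exact absurd (h ▸ h1A) hyA
      · exact h
  refine ⟨y₀, hyIoo, X y₀, Y y₀, hX0 y₀, hY0 y₀, hX' y₀, hY' y₀, ?_⟩
  intro t ht
  by_contra hout
  have htE2 : Y y₀ t ≤ -1 ∨ 1 ≤ Y y₀ t := by
    rw [mem_Ioo] at hout
    by_contra hcc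
    push_neg at hcc
    exact hout ⟨hcc.1, hcc.2⟩
  set E : Set ℝ := {u | 0 ≤ u ∧ (Y y₀ u ≤ -1 ∨ 1 ≤ Y y₀ u)} with hEdef
  have hEne : E.Nonempty := ⟨t, ht, htE2⟩
  have hEc : IsClosed E := by
    have : E = {u | 0 ≤ u} ∩ ({u | Y y₀ u ≤ -1} ∪ {u | 1 ≤ Y y₀ u}) := rfl
    rw [this]
    exact (isClosed_le continuous_const continuous_id).inter
      ((isClosed_le (hYc y₀) continuous_const).union
        (isClosed_le continuous_const (hYc y₀)))
  have hEb : BddBelow E := ⟨0, fun u hu => hu.1⟩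
  set t0 := sInf E with ht0def
  have ht0E : t0 ∈ E := hEc.csInf_mem hEne hEb
  have ht0pos : 0 < t0 := by
    rcases eq_or_lt_of_le ht0E.1 with h | h
    · exfalso
      have h2 := ht0E.2
      rw [← h, hY0] at h2
      rcases h2 with h2 | h2
      · linarith [hyIoo.1]
      · linarith [hyIoo.2]
    · exact h
  have hbef : ∀ u, 0 ≤ u → u < t0 → -1 < Y y₀ u ∧ Y y₀ u < 1 := by
    intro u hu0 hut
    by_contra hcc
    rw [not_and_or] at hcc
    push_neg at hcc
    have : u ∈ E := ⟨hu0, hcc⟩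
    exact absurd (csInf_le hEb this) (not_le.mpr hut)
  have htend : Tendsto (Y y₀) (𝓝[<] t0) (𝓝 (Y y₀ t0)) :=
    ((hYc y₀).tendsto t0).mono_left nhdsWithin_le_nhds
  have hevmem : ∀ᶠ u in 𝓝[<] t0, u ∈ Ioo 0 t0 :=
    eventually_of_mem (Ioo_mem_nhdsLT_of_mem ⟨ht0pos, le_refl t0⟩) (fun u hu => hu)
  rcases ht0E.2 with hlow | hup
  · -- exits through the bottom: y₀ ∈ B, contradiction
    have hYt0 : Y y₀ t0 = -1 := by
      refine le_antisymm hlow (ge_of_tendsto htend ?_)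
      exact hevmem.mono fun u hu => (hbef u hu.1.le hu.2).1.le
    have hd : w (X y₀ t0) (Y y₀ t0) < 0 := by rw [hYt0]; exact hbot _
    obtain ⟨η, hη, hball⟩ : ∃ η > 0, ∀ τ : ℝ, |τ - t0| < η → Y y₀ τ < 1 := by
      have hop : IsOpen {τ : ℝ | Y y₀ τ < 1} := isOpen_lt (hYc y₀) continuous_const
      obtain ⟨η, hη, hsub⟩ := Metric.isOpen_iff.mp hop t0 (by
        simp only [mem_setOf_eq, hYt0]; norm_num)
      exact ⟨η, hη, fun τ hτ => hsub (by simpa [Real.dist_eq] using hτ)⟩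
    obtain ⟨t1, ht1a, ht1b, ht1c⟩ := aux_exists_lt (hY' y₀ t0) hd hη
    rw [hYt0] at ht1c
    refine hyB ⟨hy₀I, t1, by linarith, ht1c, ?_⟩
    intro τ hτ
    rcases lt_or_ge τ t0 with h | h
    · exact (hbef τ hτ.1 h).2
    · exact hball τ (by rw [abs_of_nonneg (by linarith)]; linarith [hτ.2])
  · -- exits through the top: y₀ ∈ A, contradiction
    have hYt0 : Y y₀ t0 = 1 := by
      refine le_antisymm (le_of_tendsto htend ?_) hup
      exact hevmem.mono fun u hu => (hbef u hu.1.le hu.2).2.le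
    have hd : 0 < w (X y₀ t0) (Y y₀ t0) := by rw [hYt0]; exact htop _
    obtain ⟨η, hη, hball⟩ : ∃ η > 0, ∀ τ : ℝ, |τ - t0| < η → -1 < Y y₀ τ := by
      have hop : IsOpen {τ : ℝ | -1 < Y y₀ τ} := isOpen_lt continuous_const (hYc y₀)
      obtain ⟨η, hη, hsub⟩ := Metric.isOpen_iff.mp hop t0 (by
        simp only [mem_setOf_eq, hYt0]; norm_num)
      exact ⟨η, hη, fun τ hτ => hsub (by simpa [Real.dist_eq] using hτ)⟩
    obtain ⟨t1, ht1a, ht1b, ht1c⟩ := aux_exists_gt (hY' y₀ t0) hd hη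
    rw [hYt0] at ht1c
    refine hyA ⟨hy₀I, t1, by linarith, ht1c, ?_⟩
    intro τ hτ
    rcases lt_or_ge τ t0 with h | h
    · exact (hbef τ hτ.1 h).1
    · exact hball τ (by rw [abs_of_nonneg (by linarith)]; linarith [hτ.2])
end

section
/- Let f : ℝ → ℝ be continuous and T-periodic. Then the pendulum equation ẍ = f(t) sin x − cos x has a T-periodic solution x(t) with 0 < x(t) < π for all t. -/
open Set Real MeasureTheory Filter

namespace Stmt7

variable {ω : ℝ}

lemma expIoi_integrableOn (hω : 0 < ω) (a : ℝ) :
    IntegrableOn (fun s => Real.exp (-ω * s)) (Ioi a) :=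
  exp_neg_integrableOn_Ioi _ hω

lemma expIic_integrableOn (hω : 0 < ω) (c : ℝ) :
    IntegrableOn (fun s => Real.exp (ω * s)) (Iic c) := by
  have m : MeasurableEmbedding (Neg.neg : ℝ → ℝ) :=
    (Homeomorph.neg ℝ).measurableEmbedding
  have key : IntegrableOn (fun x : ℝ => Real.exp (-ω * x)) (Ici (-c)) :=
    Iff.mpr integrableOn_Ici_iff_integrableOn_Ioi (expIoi_integrableOn hω (-c))
  have h2 : IntegrableOn ((fun s => Real.exp (ω * s)) ∘ (Neg.neg : ℝ → ℝ))
      ((Neg.neg : ℝ → ℝ) ⁻¹' Iic c) := by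
    have e1 : ((fun s => Real.exp (ω * s)) ∘ (Neg.neg : ℝ → ℝ))
        = fun x : ℝ => Real.exp (-ω * x) := by
      funext x; simp [Function.comp, neg_mul, mul_neg]
    have e2 : (Neg.neg : ℝ → ℝ) ⁻¹' Iic c = Ici (-c) := by
      ext x; simp [neg_le]
    rw [e1, e2]; exact key
  have := m.integrableOn_map_iff.mpr h2
  rwa [Measure.map_neg_eq_self (volume : Measure ℝ)] at this

lemma expIoi_integral (hω : 0 < ω) (a : ℝ) :
    ∫ s in Ioi a, Real.exp (-ω * s) = Real.exp (-ω * a) / ω := by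
  have hderiv : ∀ x ∈ Ici a, HasDerivAt (fun y => -(Real.exp (-ω * y) / ω))
      (Real.exp (-ω * x)) x := by
    intro x _
    have h1 : HasDerivAt (fun y : ℝ => -ω * y) (-ω) x := by
      simpa using (hasDerivAt_id x).const_mul (-ω)
    have h3 := ((h1.exp).div_const ω).neg
    refine h3.congr_deriv (Eq.symm ?_)
    field_simp
  have hint := expIoi_integrableOn hω a
  have htend : Tendsto (fun y => -(Real.exp (-ω * y) / ω)) atTop (nhds 0) := by
    have h1 : Tendsto (fun y : ℝ => ω * y) atTop atTop :=
      Tendsto.const_mul_atTop hω tendsto_id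
    have h2 : Tendsto (fun y : ℝ => -ω * y) atTop atBot := by
      simp_rw [neg_mul]
      exact tendsto_neg_atBot_iff.mpr h1
    have h3 : Tendsto (fun y : ℝ => Real.exp (-ω * y)) atTop (nhds 0) :=
      Real.tendsto_exp_atBot.comp h2
    have h4 := (h3.div_const ω).neg
    simpa using h4
  rw [integral_Ioi_of_hasDerivAt_of_tendsto' hderiv hint htend]
  ring

lemma expIic_integral (hω : 0 < ω) (c : ℝ) :
    ∫ s in Iic c, Real.exp (ω * s) = Real.exp (ω * c) / ω := by
  have h := integral_comp_neg_Iic c (fun s => Real.exp (-ω * s))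
  have e1 : ∫ x in Iic c, Real.exp (-ω * -x) = ∫ x in Iic c, Real.exp (ω * x) := by
    apply setIntegral_congr_fun measurableSet_Iic
    intro x _; ring_nf
  rw [← e1, h, expIoi_integral hω]
  ring_nf

/-- The kernel `exp (-ω * |t - s|)` is integrable in `s`. -/
lemma ker_integrableOn_Iic (hω : 0 < ω) (t : ℝ) :
    IntegrableOn (fun s => Real.exp (-ω * |t - s|)) (Iic t) := by
  have h1 : IntegrableOn (fun s => Real.exp (-ω * t) * Real.exp (ω * s)) (Iic t) :=
    (expIic_integrableOn hω t).const_mul _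
  refine h1.congr_fun (fun s hs => ?_) measurableSet_Iic
  dsimp only
  rw [← Real.exp_add]
  congr 1
  rw [abs_of_nonneg (by simp at hs; linarith)]
  ring

lemma ker_integrableOn_Ioi (hω : 0 < ω) (t : ℝ) :
    IntegrableOn (fun s => Real.exp (-ω * |t - s|)) (Ioi t) := by
  have h1 : IntegrableOn (fun s => Real.exp (ω * t) * Real.exp (-ω * s)) (Ioi t) :=
    (expIoi_integrableOn hω t).const_mul _
  refine h1.congr_fun (fun s hs => ?_) measurableSet_Ioi
  dsimp only
  rw [← Real.exp_add]
  congr 1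
  rw [abs_of_nonpos (by simp at hs; linarith)]
  ring

lemma ker_integrable (hω : 0 < ω) (t : ℝ) :
    Integrable (fun s => Real.exp (-ω * |t - s|)) := by
  have := (ker_integrableOn_Iic hω t).union (ker_integrableOn_Ioi hω t)
  rwa [Iic_union_Ioi, integrableOn_univ] at this

lemma ker_integral (hω : 0 < ω) (t : ℝ) :
    ∫ s, Real.exp (-ω * |t - s|) = 2 / ω := by
  have hsplit : ∫ s, Real.exp (-ω * |t - s|)
      = (∫ s in Iic t, Real.exp (-ω * |t - s|)) + ∫ s in Ioi t, Real.exp (-ω * |t - s|) := by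
    rw [← setIntegral_union (Iic_disjoint_Ioi le_rfl) measurableSet_Ioi
      (ker_integrableOn_Iic hω t) (ker_integrableOn_Ioi hω t), Iic_union_Ioi,
      setIntegral_univ]
  have e1 : ∫ s in Iic t, Real.exp (-ω * |t - s|)
      = ∫ s in Iic t, Real.exp (-ω * t) * Real.exp (ω * s) := by
    refine setIntegral_congr_fun measurableSet_Iic (fun s hs => ?_)
    rw [← Real.exp_add]; congr 1
    rw [abs_of_nonneg (by simp at hs; linarith)]; ring
  have e2 : ∫ s in Ioi t, Real.exp (-ω * |t - s|)
      = ∫ s in Ioi t, Real.exp (ω * t) * Real.exp (-ω * s) := by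
    refine setIntegral_congr_fun measurableSet_Ioi (fun s hs => ?_)
    rw [← Real.exp_add]; congr 1
    rw [abs_of_nonpos (by simp at hs; linarith)]; ring
  rw [hsplit, e1, e2, integral_const_mul, integral_const_mul, expIic_integral hω,
    expIoi_integral hω]
  rw [mul_div_assoc', mul_div_assoc', ← add_div, ← Real.exp_add, ← Real.exp_add,
    show -ω * t + ω * t = (0:ℝ) by ring, show ω * t + -ω * t = (0:ℝ) by ring, Real.exp_zero]
  norm_num

lemma ker_mul_integrable (hω : 0 < ω) (t : ℝ) {h : ℝ → ℝ} {C : ℝ}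
    (hm : AEStronglyMeasurable h volume) (hb : ∀ s, |h s| ≤ C) :
    Integrable (fun s => Real.exp (-ω * |t - s|) * h s) := by
  refine Integrable.mono' ((ker_integrable hω t).const_mul C) ?_ ?_
  · exact ((ker_integrable hω t).aestronglyMeasurable.mul hm)
  · refine Filter.Eventually.of_forall (fun s => ?_)
    have h1 : |Real.exp (-ω * |t - s|) * h s| = Real.exp (-ω * |t - s|) * |h s| := by
      rw [abs_mul, abs_of_nonneg (Real.exp_pos _).le]
    rw [Real.norm_eq_abs, h1]
    calc Real.exp (-ω * |t - s|) * |h s| ≤ Real.exp (-ω * |t - s|) * C :=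
          mul_le_mul_of_nonneg_left (hb s) (Real.exp_pos _).le
      _ = C * Real.exp (-ω * |t - s|) := by ring

/-- The Green operator for `u'' - ω² u = h` (bounded solution on ℝ). -/
noncomputable def Kw (ω : ℝ) (h : ℝ → ℝ) (t : ℝ) : ℝ :=
  -(1 / (2 * ω)) * ∫ s, Real.exp (-ω * |t - s|) * h s

lemma Kw_antitone (hω : 0 < ω) {h₁ h₂ : ℝ → ℝ} (t : ℝ)
    (i1 : Integrable (fun s => Real.exp (-ω * |t - s|) * h₁ s))
    (i2 : Integrable (fun s => Real.exp (-ω * |t - s|) * h₂ s))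
    (hle : ∀ s, h₁ s ≤ h₂ s) : Kw ω h₂ t ≤ Kw ω h₁ t := by
  unfold Kw
  have hm : (∫ s, Real.exp (-ω * |t - s|) * h₁ s) ≤ ∫ s, Real.exp (-ω * |t - s|) * h₂ s :=
    integral_mono i1 i2 (fun s => mul_le_mul_of_nonneg_left (hle s) (Real.exp_pos _).le)
  have hc : (0:ℝ) ≤ 1 / (2 * ω) := by positivity
  nlinarith [hm, hc]

lemma Kw_const (hω : 0 < ω) (c : ℝ) (t : ℝ) :
    Kw ω (fun _ => c) t = -c / (ω * ω) := by
  unfold Kw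
  rw [MeasureTheory.integral_mul_const, ker_integral hω]
  field_simp

lemma Kw_periodic (hω : 0 < ω) {h : ℝ → ℝ} {T : ℝ} (hp : ∀ s, h (s + T) = h s) (t : ℝ) :
    Kw ω h (t + T) = Kw ω h t := by
  unfold Kw
  congr 1
  have := MeasureTheory.integral_add_right_eq_self (μ := volume)
    (fun s => Real.exp (-ω * |t + T - s|) * h s) T
  rw [← this]
  congr 1
  funext s
  rw [hp s]
  congr 2
  rw [show t + T - (s + T) = t - s by ring]

noncomputable def Aint (ω : ℝ) (h : ℝ → ℝ) (t : ℝ) : ℝ :=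
  ∫ s in Iic t, Real.exp (ω * s) * h s

noncomputable def Bint (ω : ℝ) (h : ℝ → ℝ) (t : ℝ) : ℝ :=
  ∫ s in Ioi t, Real.exp (-ω * s) * h s

lemma Amul_integrableOn (hω : 0 < ω) {h : ℝ → ℝ} {C : ℝ}
    (hm : AEStronglyMeasurable h volume) (hb : ∀ s, |h s| ≤ C) (t : ℝ) :
    IntegrableOn (fun s => Real.exp (ω * s) * h s) (Iic t) := by
  refine Integrable.mono' ((expIic_integrableOn hω t).const_mul C) ?_ ?_
  · exact ((Real.continuous_exp.comp (continuous_const.mul continuous_id)).aestronglyMeasurable.mul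
      hm).restrict
  · refine Filter.Eventually.of_forall (fun s => ?_)
    rw [Real.norm_eq_abs, abs_mul, abs_of_nonneg (Real.exp_pos _).le]
    calc Real.exp (ω * s) * |h s| ≤ Real.exp (ω * s) * C :=
          mul_le_mul_of_nonneg_left (hb s) (Real.exp_pos _).le
      _ = C * Real.exp (ω * s) := by ring

lemma Bmul_integrableOn (hω : 0 < ω) {h : ℝ → ℝ} {C : ℝ}
    (hm : AEStronglyMeasurable h volume) (hb : ∀ s, |h s| ≤ C) (t : ℝ) :
    IntegrableOn (fun s => Real.exp (-ω * s) * h s) (Ioi t) := by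
  refine Integrable.mono' ((expIoi_integrableOn hω t).const_mul C) ?_ ?_
  · exact ((Real.continuous_exp.comp (continuous_const.mul continuous_id)).aestronglyMeasurable.mul
      hm).restrict
  · refine Filter.Eventually.of_forall (fun s => ?_)
    rw [Real.norm_eq_abs, abs_mul, abs_of_nonneg (Real.exp_pos _).le]
    calc Real.exp (-ω * s) * |h s| ≤ Real.exp (-ω * s) * C :=
          mul_le_mul_of_nonneg_left (hb s) (Real.exp_pos _).le
      _ = C * Real.exp (-ω * s) := by ring

lemma Kw_eq_AB (hω : 0 < ω) {h : ℝ → ℝ} {C : ℝ}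
    (hm : AEStronglyMeasurable h volume) (hb : ∀ s, |h s| ≤ C) (t : ℝ) :
    Kw ω h t = -(1 / (2 * ω)) *
      (Real.exp (-ω * t) * Aint ω h t + Real.exp (ω * t) * Bint ω h t) := by
  have hker := ker_mul_integrable hω t hm hb
  have hsplit : ∫ s, Real.exp (-ω * |t - s|) * h s
      = (∫ s in Iic t, Real.exp (-ω * |t - s|) * h s)
        + ∫ s in Ioi t, Real.exp (-ω * |t - s|) * h s := by
    rw [← setIntegral_union (Iic_disjoint_Ioi le_rfl) measurableSet_Ioi
      hker.integrableOn hker.integrableOn, Iic_union_Ioi, setIntegral_univ]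
  have e1 : ∫ s in Iic t, Real.exp (-ω * |t - s|) * h s
      = ∫ s in Iic t, Real.exp (-ω * t) * (Real.exp (ω * s) * h s) := by
    refine setIntegral_congr_fun measurableSet_Iic (fun s hs => ?_)
    rw [← mul_assoc, ← Real.exp_add]
    congr 2
    rw [abs_of_nonneg (by simp at hs; linarith)]; ring
  have e2 : ∫ s in Ioi t, Real.exp (-ω * |t - s|) * h s
      = ∫ s in Ioi t, Real.exp (ω * t) * (Real.exp (-ω * s) * h s) := by
    refine setIntegral_congr_fun measurableSet_Ioi (fun s hs => ?_)
    rw [← mul_assoc, ← Real.exp_add]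
    congr 2
    rw [abs_of_nonpos (by simp at hs; linarith)]; ring
  unfold Kw Aint Bint
  rw [hsplit, e1, e2, integral_const_mul, integral_const_mul]

lemma Aint_sub (hω : 0 < ω) {h : ℝ → ℝ} {C : ℝ}
    (hm : AEStronglyMeasurable h volume) (hb : ∀ s, |h s| ≤ C) (a b : ℝ) :
    Aint ω h b - Aint ω h a = ∫ s in a..b, Real.exp (ω * s) * h s :=
  intervalIntegral.integral_Iic_sub_Iic (Amul_integrableOn hω hm hb a) (Amul_integrableOn hω hm hb b)

lemma Bint_sub (hω : 0 < ω) {h : ℝ → ℝ} {C : ℝ}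
    (hm : AEStronglyMeasurable h volume) (hb : ∀ s, |h s| ≤ C) (a b : ℝ) :
    Bint ω h a - Bint ω h b = ∫ s in a..b, Real.exp (-ω * s) * h s := by
  have key : ∀ a b : ℝ, a ≤ b →
      Bint ω h a - Bint ω h b = ∫ s in a..b, Real.exp (-ω * s) * h s := by
    intro a b hab
    have hsplit : Bint ω h a
        = (∫ s in Ioc a b, Real.exp (-ω * s) * h s) + Bint ω h b := by
      unfold Bint
      rw [← setIntegral_union Ioc_disjoint_Ioi_same measurableSet_Ioi
        ((Bmul_integrableOn hω hm hb a).mono_set Ioc_subset_Ioi_self)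
        (Bmul_integrableOn hω hm hb b), Ioc_union_Ioi_eq_Ioi hab]
    rw [hsplit, intervalIntegral.integral_of_le hab]
    ring
  rcases le_total a b with hab | hba
  · exact key a b hab
  · have := key b a hba
    rw [intervalIntegral.integral_symm]
    linarith

lemma Aint_continuous (hω : 0 < ω) {h : ℝ → ℝ} {C : ℝ}
    (hm : AEStronglyMeasurable h volume) (hb : ∀ s, |h s| ≤ C) :
    Continuous (Aint ω h) := by
  have hii : ∀ a b : ℝ, IntervalIntegrable (fun s => Real.exp (ω * s) * h s) volume a b := by
    intro a b
    rw [intervalIntegrable_iff]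
    exact (Amul_integrableOn hω hm hb (max a b)).mono_set
      (fun x hx => (hx.2 : x ≤ max a b))
  have hcp := intervalIntegral.continuous_primitive hii 0
  have : Aint ω h = fun t => Aint ω h 0 + ∫ s in (0:ℝ)..t, Real.exp (ω * s) * h s := by
    funext t
    have := Aint_sub hω hm hb 0 t
    linarith
  rw [this]
  exact continuous_const.add hcp

lemma Bint_continuous (hω : 0 < ω) {h : ℝ → ℝ} {C : ℝ}
    (hm : AEStronglyMeasurable h volume) (hb : ∀ s, |h s| ≤ C) :
    Continuous (Bint ω h) := by
  have hii : ∀ a b : ℝ, IntervalIntegrable (fun s => Real.exp (-ω * s) * h s) volume a b := by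
    intro a b
    rw [intervalIntegrable_iff]
    exact (Bmul_integrableOn hω hm hb (min a b - 1)).mono_set
      (fun x hx => (by have := hx.1; simp only [mem_Ioi]; linarith : x ∈ Ioi (min a b - 1)))
  have hcp := intervalIntegral.continuous_primitive hii 0
  have : Bint ω h = fun t => Bint ω h 0 - ∫ s in (0:ℝ)..t, Real.exp (-ω * s) * h s := by
    funext t
    have := Bint_sub hω hm hb 0 t
    linarith
  rw [this]
  exact continuous_const.sub hcp

lemma Kw_continuous (hω : 0 < ω) {h : ℝ → ℝ} {C : ℝ}
    (hm : AEStronglyMeasurable h volume) (hb : ∀ s, |h s| ≤ C) :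
    Continuous (Kw ω h) := by
  have : Kw ω h = fun t => -(1 / (2 * ω)) *
      (Real.exp (-ω * t) * Aint ω h t + Real.exp (ω * t) * Bint ω h t) := by
    funext t; exact Kw_eq_AB hω hm hb t
  rw [this]
  have hexp1 : Continuous fun t : ℝ => Real.exp (-ω * t) :=
    Real.continuous_exp.comp (continuous_const.mul continuous_id)
  have hexp2 : Continuous fun t : ℝ => Real.exp (ω * t) :=
    Real.continuous_exp.comp (continuous_const.mul continuous_id)
  exact continuous_const.mul ((hexp1.mul (Aint_continuous hω hm hb)).add
    (hexp2.mul (Bint_continuous hω hm hb)))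

lemma Aint_hasDeriv (hω : 0 < ω) {h : ℝ → ℝ} {C : ℝ} (hc : Continuous h)
    (hb : ∀ s, |h s| ≤ C) (t : ℝ) :
    HasDerivAt (Aint ω h) (Real.exp (ω * t) * h t) t := by
  have hm : AEStronglyMeasurable h volume := hc.aestronglyMeasurable
  have hFc : Continuous fun s => Real.exp (ω * s) * h s :=
    (Real.continuous_exp.comp (continuous_const.mul continuous_id)).mul hc
  have heq : Aint ω h = fun u => Aint ω h 0 + ∫ s in (0:ℝ)..u, Real.exp (ω * s) * h s := by
    funext u
    have := Aint_sub hω hm hb 0 u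
    linarith
  rw [heq]
  have := intervalIntegral.integral_hasDerivAt_right
    (hFc.intervalIntegrable 0 t) (hFc.stronglyMeasurableAtFilter volume (nhds t))
    hFc.continuousAt
  exact this.const_add _

lemma Bint_hasDeriv (hω : 0 < ω) {h : ℝ → ℝ} {C : ℝ} (hc : Continuous h)
    (hb : ∀ s, |h s| ≤ C) (t : ℝ) :
    HasDerivAt (Bint ω h) (-(Real.exp (-ω * t) * h t)) t := by
  have hm : AEStronglyMeasurable h volume := hc.aestronglyMeasurable
  have hFc : Continuous fun s => Real.exp (-ω * s) * h s :=
    (Real.continuous_exp.comp (continuous_const.mul continuous_id)).mul hc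
  have heq : Bint ω h = fun u => Bint ω h 0 - ∫ s in (0:ℝ)..u, Real.exp (-ω * s) * h s := by
    funext u
    have := Bint_sub hω hm hb 0 u
    linarith
  rw [heq]
  have := intervalIntegral.integral_hasDerivAt_right
    (hFc.intervalIntegrable 0 t) (hFc.stronglyMeasurableAtFilter volume (nhds t))
    hFc.continuousAt
  exact this.const_sub _

/-- Candidate derivative of `Kw ω h`. -/
noncomputable def Kd (ω : ℝ) (h : ℝ → ℝ) (t : ℝ) : ℝ :=
  (1 / 2) * (Real.exp (-ω * t) * Aint ω h t - Real.exp (ω * t) * Bint ω h t)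

lemma exp_hasDeriv_neg (ω t : ℝ) :
    HasDerivAt (fun u : ℝ => Real.exp (-ω * u)) (-ω * Real.exp (-ω * t)) t := by
  have h1 : HasDerivAt (fun u : ℝ => -ω * u) (-ω) t := by
    simpa using (hasDerivAt_id t).const_mul (-ω)
  simpa [mul_comm] using h1.exp

lemma exp_hasDeriv_pos (ω t : ℝ) :
    HasDerivAt (fun u : ℝ => Real.exp (ω * u)) (ω * Real.exp (ω * t)) t := by
  have h1 : HasDerivAt (fun u : ℝ => ω * u) ω t := by
    simpa using (hasDerivAt_id t).const_mul ω
  simpa [mul_comm] using h1.exp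

lemma exp_mul_exp_neg (ω t : ℝ) : Real.exp (-ω * t) * Real.exp (ω * t) = 1 := by
  rw [← Real.exp_add, show -ω * t + ω * t = (0:ℝ) by ring, Real.exp_zero]

lemma Kw_hasDeriv (hω : 0 < ω) {h : ℝ → ℝ} {C : ℝ} (hc : Continuous h)
    (hb : ∀ s, |h s| ≤ C) (t : ℝ) :
    HasDerivAt (Kw ω h) (Kd ω h t) t := by
  have hm : AEStronglyMeasurable h volume := hc.aestronglyMeasurable
  have heq : Kw ω h = fun u => -(1 / (2 * ω)) *
      (Real.exp (-ω * u) * Aint ω h u + Real.exp (ω * u) * Bint ω h u) := by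
    funext u; exact Kw_eq_AB hω hm hb u
  rw [heq]
  have hA := Aint_hasDeriv hω hc hb t
  have hB := Bint_hasDeriv hω hc hb t
  have hd := (((exp_hasDeriv_neg ω t).mul hA).add ((exp_hasDeriv_pos ω t).mul hB)).const_mul
    (-(1 / (2 * ω)))
  refine hd.congr_deriv (Eq.symm ?_)
  unfold Kd
  have e1 := exp_mul_exp_neg ω t
  have e2 : Real.exp (ω * t) * Real.exp (-ω * t) = 1 := by
    rw [mul_comm]; exact e1
  field_simp
  ring_nf

lemma Kd_hasDeriv (hω : 0 < ω) {h : ℝ → ℝ} {C : ℝ} (hc : Continuous h)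
    (hb : ∀ s, |h s| ≤ C) (t : ℝ) :
    HasDerivAt (Kd ω h) (ω * ω * Kw ω h t + h t) t := by
  have hm : AEStronglyMeasurable h volume := hc.aestronglyMeasurable
  have hA := Aint_hasDeriv hω hc hb t
  have hB := Bint_hasDeriv hω hc hb t
  have hd := (((exp_hasDeriv_neg ω t).mul hA).sub ((exp_hasDeriv_pos ω t).mul hB)).const_mul
    ((1:ℝ) / 2)
  have hKd : Kd ω h = fun u => (1 / 2) *
      (Real.exp (-ω * u) * Aint ω h u - Real.exp (ω * u) * Bint ω h u) := rfl
  rw [hKd]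
  refine hd.congr_deriv (Eq.symm ?_)
  rw [Kw_eq_AB hω hm hb t]
  have e1 := exp_mul_exp_neg ω t
  rw [neg_mul] at e1
  field_simp
  linear_combination (-2 * h t) * e1

lemma periodic_bound {f : ℝ → ℝ} {T : ℝ} (hT : 0 < T) (hf : Continuous f)
    (hper : Function.Periodic f T) : ∃ M : ℝ, 0 ≤ M ∧ ∀ t, |f t| ≤ M := by
  obtain ⟨C, hC⟩ := (isCompact_Icc (a := (0:ℝ)) (b := T)).exists_bound_of_continuousOn
    hf.continuousOn
  refine ⟨max C 0, le_max_right _ _, fun t => ?_⟩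
  have hfr : f (t - (⌊t / T⌋ : ℤ) * T) = f t := hper.sub_int_mul_eq ⌊t / T⌋
  have hmem : t - (⌊t / T⌋ : ℤ) * T ∈ Icc (0:ℝ) T := by
    have h1 := Int.fract_nonneg (t / T)
    have h2 := (Int.fract_lt_one (t / T)).le
    have he : t - (⌊t / T⌋ : ℤ) * T = T * Int.fract (t / T) := by
      rw [Int.fract]
      field_simp
    rw [he]
    constructor
    · positivity
    · nlinarith
  have := hC _ hmem
  rw [hfr] at this
  exact le_trans this (le_max_left _ _)

end Stmt7

open Stmt7 in
/-- the inverted pendulum `ẍ = f(t) sin x − cos x` with `f` continuous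
and `T`-periodic has a `T`-periodic solution staying in `(0, π)`. -/
theorem stmt_7 (f : ℝ → ℝ) (T : ℝ) (hT : 0 < T)
    (hf : Continuous f) (hper : Function.Periodic f T) :
    ∃ x x' : ℝ → ℝ,
      (∀ t : ℝ, HasDerivAt x (x' t) t) ∧
      (∀ t : ℝ, HasDerivAt x' (f t * Real.sin (x t) - Real.cos (x t)) t) ∧
      (∀ t : ℝ, x (t + T) = x t) ∧
      ∀ t : ℝ, x t ∈ Ioo 0 π := by
  classical
  obtain ⟨M, hM0, hMb⟩ := periodic_bound hT hf hper
  set ω : ℝ := Real.sqrt (M + 1) with hωdef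
  have hω : 0 < ω := Real.sqrt_pos.mpr (by linarith)
  have hω2 : ω * ω = M + 1 := Real.mul_self_sqrt (by linarith)
  set ε : ℝ := min 1 (1 / (2 * (M + 1))) with hεdef
  have hε0 : 0 < ε := lt_min one_pos (by positivity)
  have hε1 : ε ≤ 1 := min_le_left _ _
  have hε2 : ε ≤ 1 / (2 * (M + 1)) := min_le_right _ _
  have hπ3 : (3:ℝ) < π := Real.pi_gt_three
  have hεπ : ε ≤ π - ε := by linarith
  have hεπ2 : π - ε ≤ π := by linarith
  have hsinε : 0 ≤ Real.sin ε := Real.sin_nonneg_of_nonneg_of_le_pi hε0.le (by linarith)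
  have hkey : M * Real.sin ε ≤ Real.cos ε := by
    have h1 : Real.sin ε ≤ ε := Real.sin_le hε0.le
    have h2 : 1 - ε ^ 2 / 2 ≤ Real.cos ε := Real.one_sub_sq_div_two_le_cos
    have h3 : M * ε ≤ 1 / 2 := by
      have : ε * (2 * (M + 1)) ≤ 1 := by
        rw [← le_div_iff₀ (by positivity)]
        exact hε2
      nlinarith
    nlinarith
  -- the nonlinearity, shifted
  set g : ℝ → ℝ → ℝ := fun s x => f s * Real.sin x - Real.cos x - (M + 1) * x with hgdef
  have hgderiv : ∀ s x : ℝ, HasDerivAt (fun y => g s y)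
      (f s * Real.cos x + Real.sin x - (M + 1)) x := by
    intro s x
    have h1 := (Real.hasDerivAt_sin x).const_mul (f s)
    have h2 := Real.hasDerivAt_cos x
    have h3 : HasDerivAt (fun y : ℝ => (M + 1) * y) (M + 1) x := by
      simpa using (hasDerivAt_id x).const_mul (M + 1)
    have := (h1.sub h2).sub h3
    refine this.congr_deriv (Eq.symm ?_)
    ring
  have hganti : ∀ s : ℝ, ∀ x y : ℝ, x ≤ y → g s y ≤ g s x := by
    intro s x y hxy
    refine antitone_of_hasDerivAt_nonpos (f' := fun x => f s * Real.cos x + Real.sin x - (M + 1))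
      (hgderiv s) ?_ hxy
    intro z
    have h1 : |f s * Real.cos z| ≤ M * 1 :=
      abs_mul (f s) (Real.cos z) ▸ mul_le_mul (hMb s) (Real.abs_cos_le_one z)
        (abs_nonneg _) hM0
    have h2 := abs_le.mp h1
    have h3 := Real.sin_le_one z
    show f s * Real.cos z + Real.sin z - (M + 1) ≤ 0
    linarith
  have hgbd : ∀ s x : ℝ, 0 ≤ x → x ≤ π → |g s x| ≤ M + 1 + (M + 1) * π := by
    intro s x hx0 hxπ
    have h1 : |f s * Real.sin x| ≤ M * 1 :=
      abs_mul (f s) (Real.sin x) ▸ mul_le_mul (hMb s) (Real.abs_sin_le_one x)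
        (abs_nonneg _) hM0
    have h2 := abs_le.mp h1
    have h3 := Real.neg_one_le_cos x
    have h4 := Real.cos_le_one x
    have h5 : 0 ≤ (M + 1) * x := by positivity
    have h6 : (M + 1) * x ≤ (M + 1) * π := by nlinarith
    rw [abs_le]
    constructor <;> simp only [hgdef] <;> linarith
  set Cg : ℝ := M + 1 + (M + 1) * π with hCgdef
  -- the iteration
  set α : ℕ → ℝ → ℝ := fun n => Nat.rec (motive := fun _ => ℝ → ℝ) (fun _ => ε)
    (fun _ p => Kw ω (fun s => g s (p s))) n with hαdef
  have hα0 : α 0 = fun _ => ε := rfl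
  have hαsucc : ∀ n, α (n + 1) = Kw ω (fun s => g s (α n s)) := fun n => rfl
  -- lower barrier inequality
  have hglow : ∀ s x : ℝ, ε ≤ x → x ≤ π - ε → g s x ≤ -((M + 1) * ε) := by
    intro s x hx1 hx2
    have h1 : g s x ≤ g s ε := hganti s ε x hx1
    have h2 : f s * Real.sin ε ≤ Real.cos ε := by
      have : f s * Real.sin ε ≤ |f s| * Real.sin ε :=
        mul_le_mul_of_nonneg_right (le_abs_self _) hsinε
      have h3 : |f s| * Real.sin ε ≤ M * Real.sin ε :=
        mul_le_mul_of_nonneg_right (hMb s) hsinε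
      linarith
    simp only [hgdef] at h1 ⊢
    linarith
  have hghigh : ∀ s x : ℝ, ε ≤ x → x ≤ π - ε → -((M + 1) * (π - ε)) ≤ g s x := by
    intro s x hx1 hx2
    have h1 : g s (π - ε) ≤ g s x := hganti s x (π - ε) hx2
    have h2 : -(Real.cos ε) ≤ f s * Real.sin ε := by
      have ha : -(f s) * Real.sin ε ≤ |f s| * Real.sin ε := by
        refine mul_le_mul_of_nonneg_right ?_ hsinε
        exact neg_le_abs _
      have h3 : |f s| * Real.sin ε ≤ M * Real.sin ε :=
        mul_le_mul_of_nonneg_right (hMb s) hsinε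
      nlinarith
    have hsp : Real.sin (π - ε) = Real.sin ε := Real.sin_pi_sub ε
    have hcp : Real.cos (π - ε) = -(Real.cos ε) := Real.cos_pi_sub ε
    simp only [hgdef, hsp, hcp] at h1 ⊢
    linarith
  -- invariant
  have inv : ∀ n : ℕ, Continuous (α n) ∧ (∀ t, α n (t + T) = α n t) ∧
      (∀ t, ε ≤ α n t ∧ α n t ≤ π - ε) ∧ (∀ t, α n t ≤ α (n + 1) t) := by
    intro n
    induction n with
    | zero =>
      refine ⟨continuous_const, fun t => rfl, fun t => ⟨le_refl _, hεπ⟩, fun t => ?_⟩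
      -- ε ≤ α 1 t
      rw [hαsucc 0]
      have hconst : Kw ω (fun _ => -((M + 1) * ε)) t = ε := by
        rw [Kw_const hω, hω2]
        field_simp
      have hle := Kw_antitone hω (h₁ := fun s => g s ε) (h₂ := fun _ => -((M + 1) * ε)) t
        (ker_mul_integrable hω t (hf.mul continuous_const |>.sub
          continuous_const |>.sub continuous_const).aestronglyMeasurable
          (C := Cg) (fun s => hgbd s ε hε0.le (by linarith)))
        (ker_mul_integrable hω t aestronglyMeasurable_const
          (C := |(-((M + 1) * ε))|) (fun s => le_refl _))
        (fun s => hglow s ε (le_refl _) hεπ)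
      rw [hα0]
      rw [hconst] at hle
      exact hle
    | succ n ih =>
      obtain ⟨hc, hp, hr, hm⟩ := ih
      have hhc : Continuous fun s => g s (α n s) := by
        simp only [hgdef]
        exact (hf.mul (Real.continuous_sin.comp hc)).sub
          (Real.continuous_cos.comp hc) |>.sub (continuous_const.mul hc)
      have hhb : ∀ s, |g s (α n s)| ≤ Cg := fun s =>
        hgbd s (α n s) (le_trans hε0.le (hr s).1) (le_trans (hr s).2 hεπ2)
      have hintn : ∀ t, Integrable (fun s => Real.exp (-ω * |t - s|) * g s (α n s)) :=
        fun t => ker_mul_integrable hω t hhc.aestronglyMeasurable hhb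
      have hcs : Continuous (α (n + 1)) := by
        rw [hαsucc n]; exact Kw_continuous hω hhc.aestronglyMeasurable hhb
      have hps : ∀ t, α (n + 1) (t + T) = α (n + 1) t := by
        intro t
        rw [hαsucc n]
        refine Kw_periodic hω (fun s => ?_) t
        simp only [hgdef]
        rw [hp s, hper s]
      have hrs : ∀ t, ε ≤ α (n + 1) t ∧ α (n + 1) t ≤ π - ε := by
        intro t
        constructor
        · have hconst : Kw ω (fun _ => -((M + 1) * ε)) t = ε := by
            rw [Kw_const hω, hω2]; field_simp
          have hle := Kw_antitone hω (h₁ := fun s => g s (α n s))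
            (h₂ := fun _ => -((M + 1) * ε)) t (hintn t)
            (ker_mul_integrable hω t aestronglyMeasurable_const
              (C := |(-((M + 1) * ε))|) (fun s => le_refl _))
            (fun s => hglow s (α n s) (hr s).1 (hr s).2)
          rw [hαsucc n, ← hconst]
          exact hle
        · have hconst : Kw ω (fun _ => -((M + 1) * (π - ε))) t = π - ε := by
            rw [Kw_const hω, hω2]; field_simp
          have hle := Kw_antitone hω (h₁ := fun _ => -((M + 1) * (π - ε)))
            (h₂ := fun s => g s (α n s)) t
            (ker_mul_integrable hω t aestronglyMeasurable_const
              (C := |(-((M + 1) * (π - ε)))|) (fun s => le_refl _))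
            (hintn t)
            (fun s => hghigh s (α n s) (hr s).1 (hr s).2)
          rw [hαsucc n, ← hconst]
          exact hle
      refine ⟨hcs, hps, hrs, fun t => ?_⟩
      -- α (n+1) ≤ α (n+2)
      have hhc2 : Continuous fun s => g s (α (n + 1) s) := by
        simp only [hgdef]
        exact (hf.mul (Real.continuous_sin.comp hcs)).sub
          (Real.continuous_cos.comp hcs) |>.sub (continuous_const.mul hcs)
      have hhb2 : ∀ s, |g s (α (n + 1) s)| ≤ Cg := fun s =>
        hgbd s (α (n + 1) s) (le_trans hε0.le (hrs s).1) (le_trans (hrs s).2 hεπ2)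
      have hle := Kw_antitone hω (h₁ := fun s => g s (α (n + 1) s))
        (h₂ := fun s => g s (α n s)) t
        (ker_mul_integrable hω t hhc2.aestronglyMeasurable hhb2)
        (hintn t)
        (fun s => hganti s (α n s) (α (n + 1) s) (hm s))
      rw [hαsucc n, hαsucc (n + 1)]
      exact hle
  -- the limit
  have hmono : ∀ t, Monotone fun n => α n t := by
    intro t
    exact monotone_nat_of_le_succ (fun n => (inv n).2.2.2 t)
  have hbdd : ∀ t, BddAbove (Set.range fun n => α n t) := by
    intro t
    exact ⟨π - ε, fun y ⟨n, hn⟩ => hn ▸ ((inv n).2.2.1 t).2⟩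
  set u : ℝ → ℝ := fun t => ⨆ n, α n t with hudef
  have hconv : ∀ t, Filter.Tendsto (fun n => α n t) Filter.atTop (nhds (u t)) :=
    fun t => tendsto_atTop_ciSup (hmono t) (hbdd t)
  have hulow : ∀ t, ε ≤ u t := by
    intro t
    have := le_ciSup (hbdd t) 0
    simpa [hα0] using this
  have huhigh : ∀ t, u t ≤ π - ε := by
    intro t
    exact ciSup_le (fun n => ((inv n).2.2.1 t).2)
  have huper : ∀ t, u (t + T) = u t := by
    intro t
    simp only [hudef]
    congr 1
    funext n
    exact (inv n).2.1 t
  have humeas : Measurable u := by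
    refine measurable_of_tendsto_metrizable (fun n => (inv n).1.measurable) ?_
    rw [tendsto_pi_nhds]
    exact hconv
  -- fixed point equation
  set hS : ℝ → ℝ := fun s => g s (u s) with hhidef
  have hSmeas : AEStronglyMeasurable hS volume := by
    apply Measurable.aestronglyMeasurable
    simp only [hhidef, hgdef]
    exact ((hf.measurable.mul (Real.measurable_sin.comp humeas)).sub
      (Real.measurable_cos.comp humeas)).sub (measurable_const.mul humeas)
  have hSbd : ∀ s, |hS s| ≤ Cg := fun s =>
    hgbd s (u s) (le_trans hε0.le (hulow s)) (le_trans (huhigh s) hεπ2)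
  have hfix : ∀ t, u t = Kw ω hS t := by
    intro t
    have h1 : Filter.Tendsto (fun n => α (n + 1) t) Filter.atTop (nhds (u t)) :=
      (hconv t).comp (Filter.tendsto_add_atTop_nat 1)
    have h2 : Filter.Tendsto (fun n => ∫ s, Real.exp (-ω * |t - s|) * g s (α n s))
        Filter.atTop (nhds (∫ s, Real.exp (-ω * |t - s|) * hS s)) := by
      refine MeasureTheory.tendsto_integral_of_dominated_convergence
        (fun s => Real.exp (-ω * |t - s|) * Cg) ?_ ?_ ?_ ?_
      · intro n
        have hhc : Continuous fun s => g s (α n s) := by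
          simp only [hgdef]
          exact (hf.mul (Real.continuous_sin.comp (inv n).1)).sub
            (Real.continuous_cos.comp (inv n).1) |>.sub (continuous_const.mul (inv n).1)
        exact ((ker_integrable hω t).aestronglyMeasurable.mul
          hhc.aestronglyMeasurable)
      · exact (ker_integrable hω t).mul_const Cg
      · intro n
        refine Filter.Eventually.of_forall (fun s => ?_)
        have hhb : |g s (α n s)| ≤ Cg :=
          hgbd s (α n s) (le_trans hε0.le (((inv n).2.2.1 s)).1)
            (le_trans (((inv n).2.2.1 s)).2 hεπ2)
        rw [Real.norm_eq_abs, abs_mul, abs_of_nonneg (Real.exp_pos _).le]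
        exact mul_le_mul_of_nonneg_left hhb (Real.exp_pos _).le
      · refine Filter.Eventually.of_forall (fun s => ?_)
        have hφ : Continuous fun x : ℝ =>
            Real.exp (-ω * |t - s|) * (f s * Real.sin x - Real.cos x - (M + 1) * x) := by
          exact continuous_const.mul (((continuous_const.mul Real.continuous_sin).sub
            Real.continuous_cos).sub (continuous_const.mul continuous_id))
        exact (hφ.continuousAt.tendsto).comp (hconv s)
    have h3 : Filter.Tendsto (fun n => α (n + 1) t) Filter.atTop (nhds (Kw ω hS t)) := by
      have := h2.const_mul (-(1 / (2 * ω)))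
      simp only [hαsucc]
      exact this
    exact tendsto_nhds_unique h1 h3
  -- the solution
  set x : ℝ → ℝ := Kw ω hS with hxdef
  have hxu : ∀ t, x t = u t := fun t => (hfix t).symm
  have hxcont : Continuous x := Kw_continuous hω hSmeas hSbd
  have hSeq : hS = fun s => f s * Real.sin (x s) - Real.cos (x s) - (M + 1) * x s := by
    funext s
    simp only [hhidef, hgdef, hxu s]
  have hScont : Continuous hS := by
    rw [hSeq]
    exact ((hf.mul (Real.continuous_sin.comp hxcont)).sub
      (Real.continuous_cos.comp hxcont)).sub (continuous_const.mul hxcont)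
  refine ⟨x, Kd ω hS, fun t => Kw_hasDeriv hω hScont hSbd t, fun t => ?_, fun t => ?_, fun t => ?_⟩
  · have := Kd_hasDeriv hω hScont hSbd t
    convert this using 1
    rw [hω2]
    have : hS t = f t * Real.sin (x t) - Real.cos (x t) - (M + 1) * x t := by
      rw [hSeq]
    rw [this]
    ring
  · rw [hxu (t + T), hxu t, huper t]
  · constructor
    · have := hulow t
      rw [← hxu t] at this
      linarith
    · have := huhigh t
      rw [← hxu t] at this
      linarith
end

section
/- Let v, w : ℝ² → ℝ be C¹ with bounded derivatives, and suppose w(x,1) > a > 0 and w(x,-1) < −a for all x. Let u : ℝ → ℝ be continuous T-periodic with zero mean. Then there exists λ₀ such that for all λ ≥ λ₀, the system ẋ = v(x,y), ẏ = w(x,y) + u(λt) (assumed to have globally defined solutions in |y| ≤ 1) admits a solution with y(t) ∈ (−1,1) for every t ≥ 0. -/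
open Set

/-- A differentiable function whose derivative is positive throughout the band `[c, d]`
cannot cross the band downward. -/
lemma block_top {z g : ℝ → ℝ} {c d α β : ℝ}
    (hz : ∀ t, HasDerivAt z (g t) t)
    (hcd : c < d)
    (hpos : ∀ t, z t ∈ Icc c d → 0 < g t)
    (hαβ : α ≤ β) (hα : c < z α) (hβ : z β ≤ c) : False := by
  have hzd : Differentiable ℝ z := fun t => (hz t).differentiableAt
  have hzc : Continuous z := hzd.continuous
  set S : Set ℝ := Icc α β ∩ {t | z t ≤ c} with hS
  have hSclosed : IsClosed S := isClosed_Icc.inter (isClosed_le hzc continuous_const)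
  have hSne : S.Nonempty := ⟨β, ⟨hαβ, le_rfl⟩, hβ⟩
  have hSbdd : BddBelow S := ⟨α, fun t ht => ht.1.1⟩
  set t₂ := sInf S with ht₂def
  have ht₂S : t₂ ∈ S := hSclosed.csInf_mem hSne hSbdd
  have ht₂α : α ≤ t₂ := ht₂S.1.1
  have ht₂β : t₂ ≤ β := ht₂S.1.2
  have hzt₂ : z t₂ ≤ c := ht₂S.2
  have hne : α ≠ t₂ := fun h => absurd (h ▸ hzt₂) (not_le.mpr hα)
  have hαt₂ : α < t₂ := lt_of_le_of_ne ht₂α hne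
  have hbefore : ∀ t ∈ Ico α t₂, c < z t := by
    intro t ht
    by_contra h
    push_neg at h
    exact absurd (csInf_le hSbdd ⟨⟨ht.1, ht.2.le.trans ht₂β⟩, h⟩) (not_le.mpr ht.2)
  have hzt₂c : z t₂ = c := by
    refine le_antisymm hzt₂ ?_
    have h1 : t₂ ∈ closure (Ico α t₂) := by
      rw [closure_Ico hne]; exact ⟨ht₂α, le_rfl⟩
    have h2 : closure (Ico α t₂) ⊆ {t | c ≤ z t} :=
      closure_minimal (fun t ht => (hbefore t ht).le) (isClosed_le continuous_const hzc)
    exact h2 h1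
  set S' : Set ℝ := Icc α t₂ ∩ {t | d ≤ z t} with hS'
  have hS'closed : IsClosed S' := isClosed_Icc.inter (isClosed_le continuous_const hzc)
  by_cases hS'ne : S'.Nonempty
  · have hS'bdd : BddAbove S' := ⟨t₂, fun t ht => ht.1.2⟩
    set t₁ := sSup S' with ht₁def
    have ht₁S : t₁ ∈ S' := hS'closed.csSup_mem hS'ne hS'bdd
    have ht₁α : α ≤ t₁ := ht₁S.1.1
    have ht₁t₂ : t₁ ≤ t₂ := ht₁S.1.2
    have ht₁lt : t₁ < t₂ := by
      refine lt_of_le_of_ne ht₁t₂ (fun h => ?_)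
      have h2 : d ≤ z t₁ := ht₁S.2
      rw [h, hzt₂c] at h2
      exact absurd h2 (not_le.mpr hcd)
    have hafter : ∀ t ∈ Ioc t₁ t₂, z t < d := by
      intro t ht
      by_contra h
      push_neg at h
      exact absurd (le_csSup hS'bdd ⟨⟨ht₁α.trans ht.1.le, ht.2⟩, h⟩) (not_le.mpr ht.1)
    have hzt₁d : z t₁ = d := by
      refine le_antisymm ?_ ht₁S.2
      have h1 : t₁ ∈ closure (Ioc t₁ t₂) := by
        rw [closure_Ioc ht₁lt.ne]; exact ⟨le_rfl, ht₁t₂⟩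
      have h2 : closure (Ioc t₁ t₂) ⊆ {t | z t ≤ d} :=
        closure_minimal (fun t ht => (hafter t ht).le) (isClosed_le hzc continuous_const)
      exact h2 h1
    have hmono : StrictMonoOn z (Icc t₁ t₂) := by
      apply strictMonoOn_of_deriv_pos (convex_Icc t₁ t₂) hzc.continuousOn
      intro t ht
      rw [interior_Icc] at ht
      rw [(hz t).deriv]
      exact hpos t ⟨(hbefore t ⟨ht₁α.trans ht.1.le, ht.2⟩).le, (hafter t ⟨ht.1, ht.2.le⟩).le⟩
    have := hmono (left_mem_Icc.mpr ht₁t₂) (right_mem_Icc.mpr ht₁t₂) ht₁lt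
    rw [hzt₁d, hzt₂c] at this
    exact absurd this (not_lt.mpr hcd.le)
  · have hlt : ∀ t ∈ Icc α t₂, z t < d := by
      intro t ht
      by_contra h
      push_neg at h
      exact hS'ne ⟨t, ht, h⟩
    have hmono : StrictMonoOn z (Icc α t₂) := by
      apply strictMonoOn_of_deriv_pos (convex_Icc α t₂) hzc.continuousOn
      intro t ht
      rw [interior_Icc] at ht
      rw [(hz t).deriv]
      exact hpos t ⟨(hbefore t ⟨ht.1.le, ht.2⟩).le, (hlt t ⟨ht.1.le, ht.2.le⟩).le⟩
    have := hmono (left_mem_Icc.mpr ht₂α) (right_mem_Icc.mpr ht₂α) hαt₂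
    rw [hzt₂c] at this
    exact absurd hα (not_lt.mpr this.le)

/-- Mirror image of `block_top`: a band with negative derivative cannot be crossed upward. -/
lemma block_bot {z g : ℝ → ℝ} {c d α β : ℝ}
    (hz : ∀ t, HasDerivAt z (g t) t)
    (hcd : d < c)
    (hneg : ∀ t, z t ∈ Icc d c → g t < 0)
    (hαβ : α ≤ β) (hα : z α < c) (hβ : c ≤ z β) : False := by
  refine block_top (z := fun t => -z t) (g := fun t => -g t) (c := -c) (d := -d)
    (fun t => (hz t).neg) (by linarith) (fun t ht => ?_) hαβ
    (neg_lt_neg_iff.mpr hα) (neg_le_neg_iff.mpr hβ)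
  have h1 : -c ≤ -z t := ht.1
  have h2 : -z t ≤ -d := ht.2
  have : z t ∈ Icc d c := ⟨by linarith, by linarith⟩
  simpa using hneg t this
set_option maxHeartbeats 2000000 in
/-- Theorem 2.3 of the paper: trapping in the strip survives a rapidly
oscillating zero-mean periodic perturbation `u(λt)` of the vertical component. -/
theorem stmt_10
    (v w : ℝ → ℝ → ℝ) (u : ℝ → ℝ) (a T : ℝ)
    (hv : ContDiff ℝ 1 (fun p : ℝ × ℝ => v p.1 p.2))
    (hw : ContDiff ℝ 1 (fun p : ℝ × ℝ => w p.1 p.2))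
    -- v, w and their first derivatives are bounded
    (hbd : ∃ C : ℝ, ∀ p : ℝ × ℝ,
      |v p.1 p.2| ≤ C ∧ |w p.1 p.2| ≤ C ∧
      ‖fderiv ℝ (fun q : ℝ × ℝ => v q.1 q.2) p‖ ≤ C ∧
      ‖fderiv ℝ (fun q : ℝ × ℝ => w q.1 q.2) p‖ ≤ C)
    (ha : 0 < a)
    (htop : ∀ x : ℝ, a < w x 1)
    (hbot : ∀ x : ℝ, w x (-1) < -a)
    (hT : 0 < T)
    (hu : Continuous u) (hper : Function.Periodic u T)
    (hmean : ∫ t in (0 : ℝ)..T, u t = 0) :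
    ∃ lam₀ : ℝ, ∀ lam ≥ lam₀,
      -- assuming all solutions starting in the strip |y| ≤ 1 are globally defined
      (∀ p : ℝ × ℝ, |p.2| ≤ 1 → ∃ x y : ℝ → ℝ,
        x 0 = p.1 ∧ y 0 = p.2 ∧
        (∀ t : ℝ, HasDerivAt x (v (x t) (y t)) t) ∧
        (∀ t : ℝ, HasDerivAt y (w (x t) (y t) + u (lam * t)) t)) →
      ∃ x y : ℝ → ℝ,
        (∀ t : ℝ, HasDerivAt x (v (x t) (y t)) t) ∧
        (∀ t : ℝ, HasDerivAt y (w (x t) (y t) + u (lam * t)) t) ∧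
        ∀ t : ℝ, 0 ≤ t → y t ∈ Ioo (-1 : ℝ) 1 := by
  classical
  obtain ⟨C, hC⟩ := hbd
  have hC0 : 0 ≤ C := (abs_nonneg _).trans (hC (0, 0)).1
  set K : NNReal := C.toNNReal with hKdef
  have hKC : (K : ℝ) = C := Real.coe_toNNReal C hC0
  have hvlip : LipschitzWith K (fun p : ℝ × ℝ => v p.1 p.2) := by
    apply lipschitzWith_of_nnnorm_fderiv_le (hv.differentiable one_ne_zero)
    intro p
    rw [← NNReal.coe_le_coe, coe_nnnorm, hKC]
    exact (hC p).2.2.1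
  have hwlip : LipschitzWith K (fun p : ℝ × ℝ => w p.1 p.2) := by
    apply lipschitzWith_of_nnnorm_fderiv_le (hw.differentiable one_ne_zero)
    intro p
    rw [← NNReal.coe_le_coe, coe_nnnorm, hKC]
    exact (hC p).2.2.2
  -- the small parameter ε
  set ε : ℝ := min (1/4) (a / (6 * (C + 1))) with hεdef
  have hε0 : 0 < ε := lt_min (by norm_num) (div_pos ha (by linarith))
  have hε4 : ε ≤ 1/4 := min_le_left _ _
  have hεa : 3 * C * ε ≤ a / 2 := by
    have h1 : ε ≤ a / (6 * (C + 1)) := min_le_right _ _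
    have h2 : (0:ℝ) < 6 * (C + 1) := by linarith
    rw [le_div_iff₀ h2] at h1
    nlinarith
  -- primitive of u : bounded, periodic
  set U : ℝ → ℝ := fun t => ∫ s in (0:ℝ)..t, u s with hUdef
  have hU' : ∀ t, HasDerivAt U (u t) t := fun t =>
    (hu.integral_hasStrictDerivAt 0 t).hasDerivAt
  have hU0 : U 0 = 0 := intervalIntegral.integral_same
  have hUper : Function.Periodic U T := by
    intro t
    have h1 := intervalIntegral.integral_add_adjacent_intervals (a := (0:ℝ)) (b := t)
      (c := t + T) (μ := MeasureTheory.volume) (f := u)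
      (hu.intervalIntegrable 0 t) (hu.intervalIntegrable t (t + T))
    have h2 : (∫ s in t..(t + T), u s) = ∫ s in (0:ℝ)..T, u s := by
      simpa using hper.intervalIntegral_add_eq t 0
    simp only [hUdef]
    rw [← h1, h2, hmean, add_zero]
  have hUdiff : Differentiable ℝ U := fun t => (hU' t).differentiableAt
  have hUcont : Continuous U := hUdiff.continuous
  obtain ⟨M, hM⟩ : ∃ M, ∀ t, |U t| ≤ M := by
    obtain ⟨M, hM⟩ := (isCompact_Icc (a := (0:ℝ)) (b := T)).exists_bound_of_continuousOn
      hUcont.continuousOn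
    refine ⟨M, fun t => ?_⟩
    obtain ⟨y, hy, hyt⟩ := hUper.exists_mem_Ico₀ hT t
    rw [hyt]
    simpa using hM y ⟨hy.1, hy.2.le⟩
  have hM0 : 0 ≤ M := (abs_nonneg _).trans (hM 0)
  refine ⟨(M + 1) / ε, fun lam hlam H => ?_⟩
  have hlam0 : 0 < lam := lt_of_lt_of_le (div_pos (by linarith) hε0) hlam
  -- the rescaled primitive δ
  set δ : ℝ → ℝ := fun t => U (lam * t) / lam with hδdef
  have hδ' : ∀ t, HasDerivAt δ (u (lam * t)) t := by
    intro t
    have hlin : HasDerivAt (fun t : ℝ => lam * t) lam t := by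
      simpa using (hasDerivAt_id t).const_mul lam
    have h1 : HasDerivAt (fun t => U (lam * t)) (u (lam * t) * lam) t :=
      (hU' (lam * t)).comp t hlin
    have h2 := h1.div_const lam
    simpa [hδdef, mul_div_assoc, div_self hlam0.ne'] using h2
  have hδb : ∀ t, |δ t| ≤ ε := by
    intro t
    simp only [hδdef]
    rw [abs_div, abs_of_pos hlam0, div_le_iff₀ hlam0]
    calc |U (lam * t)| ≤ M := hM _
      _ ≤ ε * lam := by
          have h1 : (M + 1) / ε ≤ lam := hlam
          rw [div_le_iff₀ hε0] at h1
          linarith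
  have hδ0 : δ 0 = 0 := by simp [hδdef, hU0]
  -- choose solutions
  have hsol : ∀ s : ℝ, ∃ xy : (ℝ → ℝ) × (ℝ → ℝ), |s| ≤ 1 →
      xy.1 0 = 0 ∧ xy.2 0 = s ∧ (∀ t, HasDerivAt xy.1 (v (xy.1 t) (xy.2 t)) t) ∧
      (∀ t, HasDerivAt xy.2 (w (xy.1 t) (xy.2 t) + u (lam * t)) t) := by
    intro s
    by_cases hs : |s| ≤ 1
    · obtain ⟨x, y, h1, h2, h3, h4⟩ := H (0, s) hs
      exact ⟨(x, y), fun _ => ⟨h1, h2, h3, h4⟩⟩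
    · exact ⟨(id, id), fun h => absurd h hs⟩
  choose XY hXY using hsol
  set X : ℝ → ℝ → ℝ := fun s => (XY s).1 with hXdef
  set Y : ℝ → ℝ → ℝ := fun s => (XY s).2 with hYdef
  have hXY' : ∀ s : ℝ, |s| ≤ 1 →
      X s 0 = 0 ∧ Y s 0 = s ∧ (∀ t, HasDerivAt (X s) (v (X s t) (Y s t)) t) ∧
      (∀ t, HasDerivAt (Y s) (w (X s t) (Y s t) + u (lam * t)) t) := fun s hs => hXY s hs
  set Z : ℝ → ℝ → ℝ := fun s t => Y s t - δ t with hZdef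
  have hYZ : ∀ s t, Y s t = Z s t + δ t := by
    intro s t; simp [hZdef]
  have hZ0 : ∀ s : ℝ, |s| ≤ 1 → Z s 0 = s := by
    intro s hs
    simp [hZdef, hδ0, (hXY' s hs).2.1]
  have hZ' : ∀ s : ℝ, |s| ≤ 1 → ∀ t, HasDerivAt (Z s) (w (X s t) (Y s t)) t := by
    intro s hs t
    have := ((hXY' s hs).2.2.2 t).sub (hδ' t)
    rw [add_sub_cancel_right] at this
    exact this
  -- derivative sign in the two bands
  have hwpos : ∀ s : ℝ, |s| ≤ 1 → ∀ t, Z s t ∈ Icc (1 - 2*ε) (1 + 2*ε) →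
      0 < w (X s t) (Y s t) := by
    intro s hs t ht
    have hd := abs_le.mp (hδb t)
    have hy : |Y s t - 1| ≤ 3 * ε := by
      rw [abs_le]
      have := hYZ s t
      constructor <;> [nlinarith [ht.1]; nlinarith [ht.2]]
    have hlw : |w (X s t) (Y s t) - w (X s t) 1| ≤ C * |Y s t - 1| := by
      have h := hwlip.dist_le_mul (X s t, Y s t) (X s t, 1)
      rw [Prod.dist_eq] at h
      simp only [Real.dist_eq, sub_self, abs_zero] at h
      rw [max_eq_right (abs_nonneg _), hKC] at h
      exact h
    have h4 := htop (X s t)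
    have h5 : C * |Y s t - 1| ≤ a / 2 := by nlinarith [abs_nonneg (Y s t - 1)]
    have h6 := (abs_le.mp hlw).1
    linarith
  have hwneg : ∀ s : ℝ, |s| ≤ 1 → ∀ t, Z s t ∈ Icc (-1 - 2*ε) (-1 + 2*ε) →
      w (X s t) (Y s t) < 0 := by
    intro s hs t ht
    have hd := abs_le.mp (hδb t)
    have hy : |Y s t - (-1)| ≤ 3 * ε := by
      rw [abs_le]
      have := hYZ s t
      constructor <;> [nlinarith [ht.1]; nlinarith [ht.2]]
    have hlw : |w (X s t) (Y s t) - w (X s t) (-1)| ≤ C * |Y s t - (-1)| := by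
      have h := hwlip.dist_le_mul (X s t, Y s t) (X s t, -1)
      rw [Prod.dist_eq] at h
      simp only [Real.dist_eq, sub_self, abs_zero] at h
      rw [max_eq_right (abs_nonneg _), hKC] at h
      exact h
    have h4 := hbot (X s t)
    have h5 : C * |Y s t - (-1)| ≤ a / 2 := by nlinarith [abs_nonneg (Y s t - (-1))]
    have h6 := (abs_le.mp hlw).2
    linarith
  -- Gronwall : continuous dependence on the initial condition
  have hgron : ∀ s s' : ℝ, |s| ≤ 1 → |s'| ≤ 1 → ∀ t, 0 ≤ t →
      |Y s t - Y s' t| ≤ |s - s'| * Real.exp (K * t) := by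
    intro s s' hs hs' t ht
    set F : ℝ → ℝ × ℝ := fun τ => (X s τ, Y s τ) with hFdef
    set G : ℝ → ℝ × ℝ := fun τ => (X s' τ, Y s' τ) with hGdef
    set V : ℝ → ℝ × ℝ → ℝ × ℝ := fun τ p => (v p.1 p.2, w p.1 p.2 + u (lam * τ)) with hVdef
    have hVlip : ∀ τ, LipschitzWith K (V τ) := by
      intro τ
      apply LipschitzWith.of_dist_le_mul
      intro p q
      rw [Prod.dist_eq]
      apply max_le
      · exact hvlip.dist_le_mul p q
      · have h := hwlip.dist_le_mul p q
        simp only [Real.dist_eq] at h ⊢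
        simpa [hVdef, add_sub_add_right_eq_sub] using h
    have hF' : ∀ τ, HasDerivAt F (V τ (F τ)) τ := fun τ =>
      ((hXY' s hs).2.2.1 τ).prodMk ((hXY' s hs).2.2.2 τ)
    have hG' : ∀ τ, HasDerivAt G (V τ (G τ)) τ := fun τ =>
      ((hXY' s' hs').2.2.1 τ).prodMk ((hXY' s' hs').2.2.2 τ)
    have hFd : Differentiable ℝ F := fun τ => (hF' τ).differentiableAt
    have hGd : Differentiable ℝ G := fun τ => (hG' τ).differentiableAt
    have hFc : ContinuousOn F (Icc 0 t) := hFd.continuous.continuousOn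
    have hGc : ContinuousOn G (Icc 0 t) := hGd.continuous.continuousOn
    have key := dist_le_of_trajectories_ODE hVlip hFc
      (fun τ _ => (hF' τ).hasDerivWithinAt) hGc
      (fun τ _ => (hG' τ).hasDerivWithinAt)
      (le_refl (dist (F 0) (G 0))) t (right_mem_Icc.mpr ht)
    have h0 : dist (F 0) (G 0) = |s - s'| := by
      simp only [hFdef, hGdef]
      rw [Prod.dist_eq, (hXY' s hs).1, (hXY' s' hs').1, (hXY' s hs).2.1, (hXY' s' hs').2.1]
      simp [Real.dist_eq]
    rw [h0, sub_zero] at key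
    calc |Y s t - Y s' t| = dist (Y s t) (Y s' t) := (Real.dist_eq _ _).symm
      _ ≤ dist (F t) (G t) := by rw [Prod.dist_eq]; exact le_max_right _ _
      _ ≤ |s - s'| * Real.exp (K * t) := key
  -- the two open sets
  set A2 : Set ℝ := {s | -1 < s ∧ s < 1 ∧ ∃ t, 0 ≤ t ∧ 1 - 2*ε < Z s t} with hA2def
  set B2 : Set ℝ := {s | -1 < s ∧ s < 1 ∧ ∃ t, 0 ≤ t ∧ Z s t < -1 + 2*ε} with hB2def
  have hA2open : IsOpen A2 := by
    rw [Metric.isOpen_iff]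
    rintro s ⟨hs1, hs2, t, ht0, htz⟩
    refine ⟨min (min (1 - s) (s + 1)) ((Z s t - (1 - 2*ε)) / Real.exp (K * t)), ?_, ?_⟩
    · exact lt_min (lt_min (by linarith) (by linarith))
        (div_pos (by linarith) (Real.exp_pos _))
    · intro s' hs'
      rw [Metric.mem_ball, Real.dist_eq] at hs'
      have h1 : |s' - s| < 1 - s := hs'.trans_le ((min_le_left _ _).trans (min_le_left _ _))
      have h2 : |s' - s| < s + 1 := hs'.trans_le ((min_le_left _ _).trans (min_le_right _ _))
      have h3 : |s' - s| < (Z s t - (1 - 2*ε)) / Real.exp (K * t) :=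
        hs'.trans_le (min_le_right _ _)
      have ha1 := abs_lt.mp h1
      have ha2 := abs_lt.mp h2
      have hs'1 : -1 < s' := by linarith
      have hs'2 : s' < 1 := by linarith
      have hsle : |s| ≤ 1 := abs_le.mpr ⟨hs1.le, hs2.le⟩
      have hs'le : |s'| ≤ 1 := abs_le.mpr ⟨hs'1.le, hs'2.le⟩
      have hg := hgron s s' hsle hs'le t ht0
      rw [lt_div_iff₀ (Real.exp_pos _)] at h3
      have hzz : Z s t - Z s' t = Y s t - Y s' t := by simp only [hZdef]; ring
      have h6 : |s - s'| = |s' - s| := abs_sub_comm _ _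
      have h5 : Y s t - Y s' t ≤ |s' - s| * Real.exp (K * t) := by
        rw [← h6]; exact (le_abs_self _).trans hg
      refine ⟨hs'1, hs'2, t, ht0, by linarith⟩
  have hB2open : IsOpen B2 := by
    rw [Metric.isOpen_iff]
    rintro s ⟨hs1, hs2, t, ht0, htz⟩
    refine ⟨min (min (1 - s) (s + 1)) (((-1 + 2*ε) - Z s t) / Real.exp (K * t)), ?_, ?_⟩
    · exact lt_min (lt_min (by linarith) (by linarith))
        (div_pos (by linarith) (Real.exp_pos _))
    · intro s' hs'
      rw [Metric.mem_ball, Real.dist_eq] at hs'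
      have h1 : |s' - s| < 1 - s := hs'.trans_le ((min_le_left _ _).trans (min_le_left _ _))
      have h2 : |s' - s| < s + 1 := hs'.trans_le ((min_le_left _ _).trans (min_le_right _ _))
      have h3 : |s' - s| < ((-1 + 2*ε) - Z s t) / Real.exp (K * t) :=
        hs'.trans_le (min_le_right _ _)
      have ha1 := abs_lt.mp h1
      have ha2 := abs_lt.mp h2
      have hs'1 : -1 < s' := by linarith
      have hs'2 : s' < 1 := by linarith
      have hsle : |s| ≤ 1 := abs_le.mpr ⟨hs1.le, hs2.le⟩
      have hs'le : |s'| ≤ 1 := abs_le.mpr ⟨hs'1.le, hs'2.le⟩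
      have hg := hgron s s' hsle hs'le t ht0
      rw [lt_div_iff₀ (Real.exp_pos _)] at h3
      have hzz : Z s t - Z s' t = Y s t - Y s' t := by simp only [hZdef]; ring
      have h6 : |s - s'| = |s' - s| := abs_sub_comm _ _
      have h5 : Y s' t - Y s t ≤ |s' - s| * Real.exp (K * t) := by
        rw [← h6]
        have := (neg_le_abs (Y s t - Y s' t)).trans hg
        linarith
      refine ⟨hs'1, hs'2, t, ht0, by linarith⟩
  set Aset : Set ℝ := Ioi (1 - 2*ε) ∪ A2 with hAsetdef
  set Bset : Set ℝ := Iio (-1 + 2*ε) ∪ B2 with hBsetdef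
  have hAopen : IsOpen Aset := isOpen_Ioi.union hA2open
  have hBopen : IsOpen Bset := isOpen_Iio.union hB2open
  -- membership of a point of the strip in Aset/Bset yields a witness
  have hAwit : ∀ s ∈ Icc (-1:ℝ) 1, s ∈ Aset → ∃ t, 0 ≤ t ∧ 1 - 2*ε < Z s t := by
    rintro s hsI (hs | hs)
    · exact ⟨0, le_rfl, by rw [hZ0 s (abs_le.mpr ⟨hsI.1, hsI.2⟩)]; exact hs⟩
    · exact hs.2.2
  have hBwit : ∀ s ∈ Icc (-1:ℝ) 1, s ∈ Bset → ∃ t, 0 ≤ t ∧ Z s t < -1 + 2*ε := by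
    rintro s hsI (hs | hs)
    · exact ⟨0, le_rfl, by rw [hZ0 s (abs_le.mpr ⟨hsI.1, hsI.2⟩)]; exact hs⟩
    · exact hs.2.2
  -- disjointness on the strip
  have hdisj : ∀ s ∈ Icc (-1:ℝ) 1, s ∈ Aset → s ∈ Bset → False := by
    intro s hsI hsA hsB
    have hs : |s| ≤ 1 := abs_le.mpr ⟨hsI.1, hsI.2⟩
    obtain ⟨ta, hta0, htaz⟩ := hAwit s hsI hsA
    obtain ⟨tb, htb0, htbz⟩ := hBwit s hsI hsB
    have hz' := hZ' s hs
    have htopband : ∀ t, Z s t ∈ Icc (1 - 2*ε) (1 + 2*ε) → 0 < w (X s t) (Y s t) :=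
      fun t ht => hwpos s hs t ht
    have hbotband : ∀ t, Z s t ∈ Icc (-1 - 2*ε) (-1 + 2*ε) → w (X s t) (Y s t) < 0 :=
      fun t ht => hwneg s hs t ht
    by_cases hc : 1 - 2*ε < Z s 0
    · exact block_top hz' (by linarith) htopband htb0 hc (by linarith)
    · rcases le_or_gt ta tb with h | h
      · exact block_top hz' (by linarith) htopband h htaz (by linarith)
      · exact block_bot hz' (by linarith : (-1 - 2*ε) < (-1 + 2*ε)) hbotband h.le htbz
          (by linarith)
  -- connect
  have h1A : (1:ℝ) ∈ Aset := Or.inl (by simp only [mem_Ioi]; linarith)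
  have h1B : (-1:ℝ) ∈ Bset := Or.inl (by simp only [mem_Iio]; linarith)
  have hni : ¬ (Icc (-1:ℝ) 1 ⊆ Aset ∪ Bset) := by
    intro hsub
    obtain ⟨s, hsI, hsA, hsB⟩ := isPreconnected_Icc Aset Bset hAopen hBopen hsub
      ⟨1, ⟨by norm_num, le_rfl⟩, h1A⟩ ⟨-1, ⟨le_rfl, by norm_num⟩, h1B⟩
    exact hdisj s hsI hsA hsB
  obtain ⟨s₀, hs₀I, hs₀n⟩ := not_subset.mp hni
  have hnA : s₀ ∉ Aset := fun h => hs₀n (Or.inl h)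
  have hnB : s₀ ∉ Bset := fun h => hs₀n (Or.inr h)
  have hs₀u : s₀ ≤ 1 - 2*ε := not_lt.mp (fun h => hnA (Or.inl h))
  have hs₀l : -1 + 2*ε ≤ s₀ := not_lt.mp (fun h => hnB (Or.inl h))
  have hs₀1 : -1 < s₀ := by linarith
  have hs₀2 : s₀ < 1 := by linarith
  have hs₀ : |s₀| ≤ 1 := abs_le.mpr ⟨hs₀I.1, hs₀I.2⟩
  have hup : ∀ t, 0 ≤ t → Z s₀ t ≤ 1 - 2*ε := by
    intro t ht
    by_contra h
    push_neg at h
    exact hnA (Or.inr ⟨hs₀1, hs₀2, t, ht, h⟩)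
  have hlo : ∀ t, 0 ≤ t → -1 + 2*ε ≤ Z s₀ t := by
    intro t ht
    by_contra h
    push_neg at h
    exact hnB (Or.inr ⟨hs₀1, hs₀2, t, ht, h⟩)
  refine ⟨X s₀, Y s₀, (hXY' s₀ hs₀).2.2.1, (hXY' s₀ hs₀).2.2.2, ?_⟩
  intro t ht
  have h1 := hup t ht
  have h2 := hlo t ht
  have h3 := abs_le.mp (hδb t)
  have h4 := hYZ s₀ t
  exact ⟨by nlinarith [h3.1], by nlinarith [h3.2]⟩
end

section
/- Suppose x(t) solves ẍ = f(t) sin x − cos x with f bounded (|f| ≤ F), x(t₀) ∈ [0, δ], ẋ(t₀) ∈ [−δ, δ], for δ small enough (depending only on F). Then there exist ε > 0 and τ > 0, depending only on F and δ, such that x(t₀ + t') = −ε for some t' ∈ [0, τ]. -/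
open Set Real

/-- Auxiliary concavity-comparison lemma: if `g 0 ≤ 0`, `g' 0 ≤ 0`, and the second
derivative of `g` is nonpositive on the open interval `(0, T)`, then `g ≤ 0` on `[0, T]`. -/
lemma aux_concave_nonpos (g g' h : ℝ → ℝ) (T : ℝ) (hT : 0 ≤ T)
    (hg : ∀ t, HasDerivAt g (g' t) t)
    (hg' : ∀ t, HasDerivAt g' (h t) t)
    (hneg : ∀ t ∈ Ioo (0 : ℝ) T, h t ≤ 0)
    (h0 : g 0 ≤ 0) (h0' : g' 0 ≤ 0) :
    ∀ t ∈ Icc (0 : ℝ) T, g t ≤ 0 := by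
  have hg'anti : AntitoneOn g' (Icc 0 T) := by
    refine antitoneOn_of_deriv_nonpos (convex_Icc 0 T)
      (fun t _ => (hg' t).continuousAt.continuousWithinAt)
      (fun t _ => (hg' t).differentiableAt.differentiableWithinAt) ?_
    intro t ht
    rw [interior_Icc] at ht
    rw [(hg' t).deriv]
    exact hneg t ht
  have hg'le : ∀ t ∈ Icc (0 : ℝ) T, g' t ≤ 0 := fun t ht =>
    le_trans (hg'anti (left_mem_Icc.2 hT) ht ht.1) h0'
  have hganti : AntitoneOn g (Icc 0 T) := by
    refine antitoneOn_of_deriv_nonpos (convex_Icc 0 T)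
      (fun t _ => (hg t).continuousAt.continuousWithinAt)
      (fun t _ => (hg t).differentiableAt.differentiableWithinAt) ?_
    intro t ht
    rw [interior_Icc] at ht
    rw [(hg t).deriv]
    exact hg'le t ⟨ht.1.le, ht.2.le⟩
  exact fun t ht => le_trans (hganti (left_mem_Icc.2 hT) ht ht.1) h0

/-- uniform exit estimate near the lower boundary `x = 0` for the
pendulum equation `ẍ = f(t) sin x − cos x` with bounded forcing. -/
theorem stmt_17 (F : ℝ) (hF : 0 ≤ F) :
    ∃ δ₀ > (0 : ℝ), ∀ δ : ℝ, 0 < δ → δ ≤ δ₀ →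
      ∃ ε > (0 : ℝ), ∃ τ > (0 : ℝ),
        ∀ (f x x' : ℝ → ℝ) (t₀ : ℝ),
          (∀ t : ℝ, |f t| ≤ F) →
          (∀ t : ℝ, HasDerivAt x (x' t) t) →
          (∀ t : ℝ, HasDerivAt x' (f t * Real.sin (x t) - Real.cos (x t)) t) →
          x t₀ ∈ Icc 0 δ → x' t₀ ∈ Icc (-δ) δ →
          ∃ t' ∈ Icc (0 : ℝ) τ, x (t₀ + t') = -ε := by
  set η : ℝ := min (1/2) (1/(8*(F+1))) with hη_def
  have hηpos : 0 < η := lt_min (by norm_num) (by positivity)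
  have hη_half : η ≤ 1/2 := min_le_left _ _
  have hηF : η * (F + 1) ≤ 1/8 := by
    have h1 : η ≤ 1/(8*(F+1)) := min_le_right _ _
    have h2 : (0:ℝ) < F + 1 := by linarith
    have h3 : η * (F+1) ≤ 1/(8*(F+1)) * (F+1) := mul_le_mul_of_nonneg_right h1 h2.le
    have h4 : 1/(8*(F+1)) * (F+1) = 1/8 := by field_simp
    linarith
  refine ⟨η/3, by positivity, ?_⟩
  intro δ hδpos hδle
  have hδη : 3 * δ ≤ η := by linarith [hδle]
  have hδ6 : δ ≤ 1/6 := by linarith [hη_half]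
  refine ⟨δ, hδpos, 4, by norm_num, ?_⟩
  intro f x x' t₀ hfb hx hx' hx0 hx'0
  -- key band estimate
  have band : ∀ u : ℝ, |u| ≤ η → ∀ t : ℝ, f t * Real.sin u - Real.cos u + 1/2 ≤ 0 := by
    intro u hu t
    have h1 : f t * Real.sin u ≤ F * η := by
      calc f t * Real.sin u ≤ |f t * Real.sin u| := le_abs_self _
        _ = |f t| * |Real.sin u| := abs_mul _ _
        _ ≤ F * |u| := mul_le_mul (hfb t) (Real.abs_sin_le_abs) (abs_nonneg _) hF
        _ ≤ F * η := mul_le_mul_of_nonneg_left hu hF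
    have h2 : 1 - u^2/2 ≤ Real.cos u := Real.one_sub_sq_div_two_le_cos
    have h3 : u^2 ≤ η^2 := sq_le_sq' (neg_le_of_abs_le hu) (le_of_abs_le hu)
    nlinarith [hηpos.le]
  -- comparison function
  set g : ℝ → ℝ := fun s => x (t₀ + s) - (δ + δ * s - s*s/4) with hg_def
  set g' : ℝ → ℝ := fun s => x' (t₀ + s) - (δ - s/2) with hg'_def
  set h : ℝ → ℝ := fun s => f (t₀ + s) * Real.sin (x (t₀ + s)) - Real.cos (x (t₀ + s)) + 1/2
    with hh_def
  have hshift : ∀ s : ℝ, HasDerivAt (fun s : ℝ => t₀ + s) 1 s := fun s =>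
    (hasDerivAt_id s).const_add t₀
  have hgd : ∀ s, HasDerivAt g (g' s) s := by
    intro s
    have h1 : HasDerivAt (fun s => x (t₀ + s)) (x' (t₀ + s) * 1) s :=
      (hx (t₀ + s)).comp s (hshift s)
    have h2 : HasDerivAt (fun s : ℝ => δ + δ * s - s*s/4) (0 + δ * 1 - (1 * s + s * 1)/4) s :=
      ((hasDerivAt_const s δ).add ((hasDerivAt_id s).const_mul δ)).sub
        (((hasDerivAt_id s).mul (hasDerivAt_id s)).div_const 4)
    have h3 := h1.sub h2
    refine h3.congr_deriv ?_
    simp only [hg'_def]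
    ring
  have hg'd : ∀ s, HasDerivAt g' (h s) s := by
    intro s
    have h1 : HasDerivAt (fun s => x' (t₀ + s))
        ((f (t₀ + s) * Real.sin (x (t₀ + s)) - Real.cos (x (t₀ + s))) * 1) s :=
      (hx' (t₀ + s)).comp s (hshift s)
    have h2 : HasDerivAt (fun s : ℝ => δ - s/2) (0 - 1/2) s := by
      exact (hasDerivAt_const s δ).sub ((hasDerivAt_id s).div_const 2)
    have h3 := h1.sub h2
    refine h3.congr_deriv ?_
    simp only [hh_def]
    ring
  have hg0 : g 0 ≤ 0 := by simp [hg_def]; linarith [hx0.2]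
  have hg'0 : g' 0 ≤ 0 := by simp [hg'_def]; linarith [hx'0.2]
  -- main argument by contradiction
  by_contra hcon
  push_neg at hcon
  have H : ∀ t ∈ Icc (0:ℝ) 4, -δ < x (t₀ + t) := by
    intro t ht
    rcases lt_trichotomy (x (t₀ + t)) (-δ) with h1 | h1 | h1
    · -- x went below -δ somewhere: IVT gives a hit, contradiction
      exfalso
      have hcont : ContinuousOn (fun s => x (t₀ + s)) (Icc 0 t) :=
        fun s _ => ((hx (t₀ + s)).comp s (hshift s)).continuousAt.continuousWithinAt
      have hmem : -δ ∈ Icc (x (t₀ + t)) (x (t₀ + 0)) := by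
        constructor
        · exact h1.le
        · simp only [add_zero]; linarith [hx0.1]
      obtain ⟨t', ht', hxt'⟩ := intermediate_value_Icc' ht.1 hcont hmem
      exact hcon t' ⟨ht'.1, le_trans ht'.2 ht.2⟩ hxt'
    · exact absurd h1 (fun h => hcon t ht h)
    · exact h1
  -- the set where x exceeds η
  set D : Set ℝ := {t ∈ Icc (0:ℝ) 4 | η ≤ x (t₀ + t)} with hD_def
  have key : ∀ T ∈ Icc (0:ℝ) 4, (∀ s ∈ Ioo (0:ℝ) T, x (t₀ + s) < η) → g T ≤ 0 := by
    intro T hT hband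
    apply aux_concave_nonpos g g' h T hT.1 hgd hg'd _ hg0 hg'0 T (right_mem_Icc.2 hT.1)
    intro s hs
    apply band
    rw [abs_le]
    constructor
    · have := H s ⟨hs.1.le, le_trans hs.2.le hT.2⟩
      have : -η ≤ -δ := by linarith
      linarith [H s ⟨hs.1.le, le_trans hs.2.le hT.2⟩]
    · exact (hband s hs).le
  by_cases hD : D.Nonempty
  · -- first time x reaches η
    have hDclosed : IsClosed D := by
      have hcont : Continuous (fun s => x (t₀ + s)) := by
        apply continuous_iff_continuousAt.2
        intro s
        exact ((hx (t₀ + s)).comp s (hshift s)).continuousAt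
      exact isClosed_Icc.inter (isClosed_le continuous_const hcont)
    have hDbb : BddBelow D := ⟨0, fun t ht => ht.1.1⟩
    set T := sInf D with hT_def
    have hTD : T ∈ D := hDclosed.csInf_mem hD hDbb
    have hT4 : T ∈ Icc (0:ℝ) 4 := hTD.1
    have hgT : g T ≤ 0 := by
      apply key T hT4
      intro s hs
      by_contra hs'
      push_neg at hs'
      have : s ∈ D := ⟨⟨hs.1.le, le_trans hs.2.le hT4.2⟩, hs'⟩
      exact absurd (csInf_le hDbb this) (not_le.2 hs.2)
    -- but g T ≤ 0 forces x (t₀+T) ≤ 2δ < η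
    have hxT : x (t₀ + T) ≤ δ + δ * T - T*T/4 := by
      simp only [hg_def] at hgT; linarith
    have hq : δ + δ * T - T*T/4 ≤ δ + δ*δ := by nlinarith [sq_nonneg (T/2 - δ)]
    have hsq : δ*δ ≤ δ*(1/6) := mul_le_mul_of_nonneg_left hδ6 hδpos.le
    have : x (t₀ + T) < η := by linarith
    exact absurd hTD.2 (not_le.2 this)
  · -- x stays below η on all of [0,4]
    have hg4 : g 4 ≤ 0 := by
      apply key 4 (by norm_num)
      intro s hs
      by_contra hs'
      push_neg at hs'
      exact hD ⟨s, ⟨⟨hs.1.le, hs.2.le⟩, hs'⟩⟩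
    have hx4 : x (t₀ + 4) ≤ δ + δ * 4 - (4:ℝ)*4/4 := by
      simp only [hg_def] at hg4; linarith
    have := H 4 (by norm_num)
    linarith
end
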